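/- arXiv:2301.04964 — 2 statements merged into one kernel-verified Lean document; each statement's English description precedes it below -/
import Mathlib

section
/- Let π and σ be representations of Whittaker type of GL_n(F) and GL_m(F), respectively, admitting central characters ω_π and ω_σ. For a ∈ Fˣ let ψ_a : F → ℂˣ be the nontrivial additive character ψ_a(x) = ψ(ax). Then Γ(π × σ, ψ_a) = ω_π(a)^m · ω_σ(a)^{−n} · Γ(π × σ, ψ). -/
/-!
Common setup: representations of `GL_n` over a finite field `F`, Whittaker vectors,
parabolic induction, the intertwining operator and the Shahidi gamma factor,
Bessel functions, and various auxiliary matrices.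
-/

open Matrix
open scoped TensorProduct Classical

noncomputable section

namespace GammaFF

variable (F : Type) [Field F] [Fintype F] [DecidableEq F]

/-- The sum `M 0 1 + M 1 2 + ⋯` of the superdiagonal entries of a square matrix. -/
def supDiag {k : ℕ} (M : Matrix (Fin k) (Fin k) F) : F :=
  ∑ i : Fin k, ∑ j : Fin k, if (j : ℕ) = (i : ℕ) + 1 then M i j else 0

/-- `u ∈ GL_k(F)` is an upper triangular unipotent matrix. -/
def IsUnip {k : ℕ} (u : GL (Fin k) F) : Prop :=
  (∀ i : Fin k, (u : Matrix (Fin k) (Fin k) F) i i = 1) ∧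
  ∀ i j : Fin k, (j : ℕ) < (i : ℕ) → (u : Matrix (Fin k) (Fin k) F) i j = 0

variable {F}

/-- The value at `u` of the extension `ψ(u) = ψ(u_{1,2} + u_{2,3} + ⋯ + u_{k-1,k})`
of the additive character `ψ` to the subgroup `U_k` of upper triangular unipotent
matrices. -/
def psiU {k : ℕ} (ψ : AddChar F ℂ) (u : GL (Fin k) F) : ℂ :=
  ψ (supDiag F (u : Matrix (Fin k) (Fin k) F))

variable {V W : Type} [AddCommGroup V] [Module ℂ V] [AddCommGroup W] [Module ℂ W]

/-- `v` is a `ψ`-Whittaker vector of the representation `π` of `GL_n(F)`: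
`π(u) v = ψ(u) v` for all upper triangular unipotent `u`. -/
def IsWhittakerVector {n : ℕ} (π : Representation ℂ (GL (Fin n) F) V) (ψ : AddChar F ℂ)
    (v : V) : Prop :=
  ∀ u : GL (Fin n) F, IsUnip F u → π u v = psiU ψ u • v

/-- `π` is generic: it has a nonzero `ψ`-Whittaker vector. -/
def IsGeneric {n : ℕ} (π : Representation ℂ (GL (Fin n) F) V) (ψ : AddChar F ℂ) : Prop :=
  ∃ v : V, v ≠ 0 ∧ IsWhittakerVector π ψ v

/-- `π` is of Whittaker type: its `ψ`-Whittaker vectors span a one-dimensional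
subspace. -/
def WhittakerType {n : ℕ} (π : Representation ℂ (GL (Fin n) F) V) (ψ : AddChar F ℂ) : Prop :=
  ∃ v : V, v ≠ 0 ∧ IsWhittakerVector π ψ v ∧
    ∀ w : V, IsWhittakerVector π ψ w → ∃ c : ℂ, w = c • v

/-- Isomorphism of two representations of a group `G`. -/
def RepIso {G : Type} [Group G] (π : Representation ℂ G V) (τ : Representation ℂ G W) : Prop :=
  ∃ φ : V ≃ₗ[ℂ] W, ∀ g v, φ (π g v) = τ g (φ v)

/-- `π` is (isomorphic to) a subrepresentation of `τ`. -/
def IsSubrep {G : Type} [Group G] (π : Representation ℂ G V) (τ : Representation ℂ G W) : Prop :=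
  ∃ φ : V →ₗ[ℂ] W, Function.Injective φ ∧ ∀ g v, φ (π g v) = τ g (φ v)

/-- `π` is an irreducible representation. -/
def IsIrreducibleRep {G : Type} [Group G] (π : Representation ℂ G V) : Prop :=
  Nontrivial V ∧ ∀ U : Submodule ℂ V, (∀ g, ∀ v ∈ U, π g v ∈ U) → U = ⊥ ∨ U = ⊤

/-- The order preserving identification of `Fin a ⊕ Fin b` with `Fin k` when `a + b = k`. -/
def blockEquiv {a b k : ℕ} (h : a + b = k) : Fin a ⊕ Fin b ≃ Fin k :=
  finSumFinEquiv.trans (finCongr h)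

variable (F)

/-- The `k × k` block matrix `(A B; C D)` with diagonal blocks of sizes `a`, `b`,
`a + b = k`. -/
def bmat {a b k : ℕ} (h : a + b = k) (A : Matrix (Fin a) (Fin a) F) (B : Matrix (Fin a) (Fin b) F)
    (C : Matrix (Fin b) (Fin a) F) (D : Matrix (Fin b) (Fin b) F) : Matrix (Fin k) (Fin k) F :=
  (Matrix.fromBlocks A B C D).submatrix (blockEquiv h).symm (blockEquiv h).symm

lemma bmat_mul {a b k : ℕ} (h : a + b = k) (A A' : Matrix (Fin a) (Fin a) F)
    (B B' : Matrix (Fin a) (Fin b) F) (C C' : Matrix (Fin b) (Fin a) F)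
    (D D' : Matrix (Fin b) (Fin b) F) :
    bmat F h A B C D * bmat F h A' B' C' D' =
      bmat F h (A * A' + B * C') (A * B' + B * D') (C * A' + D * C') (C * B' + D * D') := by
  unfold bmat
  rw [Matrix.submatrix_mul_equiv _ _ _ ((blockEquiv h).symm) _, Matrix.fromBlocks_multiply]

lemma bmat_one {a b k : ℕ} (h : a + b = k) :
    bmat F h (1 : Matrix (Fin a) (Fin a) F) 0 0 (1 : Matrix (Fin b) (Fin b) F) = 1 := by
  unfold bmat
  rw [Matrix.fromBlocks_one, Matrix.submatrix_one_equiv]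

/-- The element `(A B; 0 D)` of the standard parabolic subgroup `P_{a,b} ≤ GL_k(F)`
(`a + b = k`), where `A ∈ GL_a(F)`, `D ∈ GL_b(F)`, and `B` is an arbitrary `a × b`
matrix.  Every element of `P_{a,b}` has this form. -/
def pElt {a b k : ℕ} (h : a + b = k) (A : GL (Fin a) F) (B : Matrix (Fin a) (Fin b) F)
    (D : GL (Fin b) F) : GL (Fin k) F where
  val := bmat F h (A : Matrix (Fin a) (Fin a) F) B 0 (D : Matrix (Fin b) (Fin b) F)
  inv := bmat F h ((A⁻¹ : GL (Fin a) F) : Matrix (Fin a) (Fin a) F)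
    (-(((A⁻¹ : GL (Fin a) F) : Matrix (Fin a) (Fin a) F) * B *
       ((D⁻¹ : GL (Fin b) F) : Matrix (Fin b) (Fin b) F))) 0
    ((D⁻¹ : GL (Fin b) F) : Matrix (Fin b) (Fin b) F)
  val_inv := by
    rw [bmat_mul]
    have h1 : (A : Matrix (Fin a) (Fin a) F) * ((A⁻¹ : GL (Fin a) F) : Matrix (Fin a) (Fin a) F)
        + B * (0 : Matrix (Fin b) (Fin a) F) = 1 := by
      rw [Matrix.mul_zero, add_zero]; exact Units.mul_inv A
    have h2 : (A : Matrix (Fin a) (Fin a) F) *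
        -(((A⁻¹ : GL (Fin a) F) : Matrix (Fin a) (Fin a) F) * B *
          ((D⁻¹ : GL (Fin b) F) : Matrix (Fin b) (Fin b) F)) +
        B * ((D⁻¹ : GL (Fin b) F) : Matrix (Fin b) (Fin b) F) = 0 := by
      rw [Matrix.mul_neg, ← Matrix.mul_assoc, ← Matrix.mul_assoc, Units.mul_inv,
        Matrix.one_mul, neg_add_cancel]
    have h3 : (0 : Matrix (Fin b) (Fin a) F) * ((A⁻¹ : GL (Fin a) F) : Matrix (Fin a) (Fin a) F)
        + (D : Matrix (Fin b) (Fin b) F) * (0 : Matrix (Fin b) (Fin a) F) = 0 := by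
      simp
    have h4 : (0 : Matrix (Fin b) (Fin a) F) *
        -(((A⁻¹ : GL (Fin a) F) : Matrix (Fin a) (Fin a) F) * B *
          ((D⁻¹ : GL (Fin b) F) : Matrix (Fin b) (Fin b) F)) +
        (D : Matrix (Fin b) (Fin b) F) * ((D⁻¹ : GL (Fin b) F) : Matrix (Fin b) (Fin b) F) = 1 := by
      rw [Matrix.zero_mul, zero_add]; exact Units.mul_inv D
    rw [h1, h2, h3, h4, bmat_one]
  inv_val := by
    rw [bmat_mul]
    have h1 : ((A⁻¹ : GL (Fin a) F) : Matrix (Fin a) (Fin a) F) * (A : Matrix (Fin a) (Fin a) F)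
        + -(((A⁻¹ : GL (Fin a) F) : Matrix (Fin a) (Fin a) F) * B *
          ((D⁻¹ : GL (Fin b) F) : Matrix (Fin b) (Fin b) F)) * (0 : Matrix (Fin b) (Fin a) F) = 1 := by
      rw [Matrix.mul_zero, add_zero]; exact Units.inv_mul A
    have h2 : ((A⁻¹ : GL (Fin a) F) : Matrix (Fin a) (Fin a) F) * B +
        -(((A⁻¹ : GL (Fin a) F) : Matrix (Fin a) (Fin a) F) * B *
          ((D⁻¹ : GL (Fin b) F) : Matrix (Fin b) (Fin b) F)) * (D : Matrix (Fin b) (Fin b) F) = 0 := by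
      rw [Matrix.neg_mul, Matrix.mul_assoc
        (((A⁻¹ : GL (Fin a) F) : Matrix (Fin a) (Fin a) F) * B) _ _, Units.inv_mul,
        Matrix.mul_one, add_neg_cancel]
    have h3 : (0 : Matrix (Fin b) (Fin a) F) * (A : Matrix (Fin a) (Fin a) F)
        + ((D⁻¹ : GL (Fin b) F) : Matrix (Fin b) (Fin b) F) * (0 : Matrix (Fin b) (Fin a) F) = 0 := by
      simp
    have h4 : (0 : Matrix (Fin b) (Fin a) F) * B +
        ((D⁻¹ : GL (Fin b) F) : Matrix (Fin b) (Fin b) F) * (D : Matrix (Fin b) (Fin b) F) = 1 := by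
      rw [Matrix.zero_mul, zero_add]; exact Units.inv_mul D
    rw [h1, h2, h3, h4, bmat_one]

/-- The permutation matrix of `e` (with `1` at the entries `(i, e i)`), as an element
of `GL_k(F)`. -/
def permGL {k : ℕ} (e : Equiv.Perm (Fin k)) : GL (Fin k) F where
  val := (e.toPEquiv).toMatrix
  inv := (e.symm.toPEquiv).toMatrix
  val_inv := by
    rw [← PEquiv.toMatrix_trans, ← Equiv.toPEquiv_trans, Equiv.self_trans_symm,
      Equiv.toPEquiv_refl, PEquiv.toMatrix_refl]
  inv_val := by
    rw [← PEquiv.toMatrix_trans, ← Equiv.toPEquiv_trans, Equiv.symm_trans_self,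
      Equiv.toPEquiv_refl, PEquiv.toMatrix_refl]

/-- The block permutation matrix in `GL_k(F)` (`a + b = k`), whose upper right `a × a`
block is `I_a` and whose lower left `b × b` block is `I_b` (all other entries `0`).
In the notation of the paper, `wSwap F a b h` is the Weyl element `w_{b,a}`. -/
def wSwap (a b k : ℕ) (h : a + b = k) : GL (Fin k) F :=
  permGL F ((blockEquiv h).symm.trans ((Equiv.sumComm (Fin a) (Fin b)).trans
    (blockEquiv ((add_comm b a).trans h))))

variable {F}

/-- The space of the parabolic induction `σ ∘ π` (`σ` on `GL_m(F)`, `π` on `GL_n(F)`):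
functions `f : GL_{m+n}(F) → W ⊗ V` with `f(pg) = (σ ⊠ π)(p) f(g)` for all
`p ∈ P_{m,n}`. -/
def IndSpace {m n k : ℕ} (h : m + n = k) (σ : Representation ℂ (GL (Fin m) F) W)
    (π : Representation ℂ (GL (Fin n) F) V) :
    Submodule ℂ (GL (Fin k) F → W ⊗[ℂ] V) where
  carrier := {f | ∀ (A : GL (Fin m) F) (B : Matrix (Fin m) (Fin n) F) (D : GL (Fin n) F)
    (g : GL (Fin k) F), f (pElt F h A B D * g) = TensorProduct.map (σ A) (π D) (f g)}
  add_mem' := by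
    intro f f' hf hf' A B D g
    simp only [Pi.add_apply, hf A B D g, hf' A B D g, map_add]
  zero_mem' := by intro A B D g; simp
  smul_mem' := by
    intro c f hf A B D g
    simp only [Pi.smul_apply, hf A B D g, LinearMap.map_smul]

/-- The parabolic induction `σ ∘ π` as a representation of `GL_{m+n}(F)`, acting by
right translation on `IndSpace`. -/
def IndRep {m n k : ℕ} (h : m + n = k) (σ : Representation ℂ (GL (Fin m) F) W)
    (π : Representation ℂ (GL (Fin n) F) V) :
    Representation ℂ (GL (Fin k) F) (IndSpace h σ π) where
  toFun g := (LinearMap.funLeft ℂ (W ⊗[ℂ] V) (fun x => x * g)).restrict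
    (fun f hf => by
      intro A B D x
      simp only [LinearMap.funLeft_apply]
      rw [mul_assoc]
      exact hf A B D (x * g))
  map_one' := by
    apply LinearMap.ext
    rintro ⟨f, hf⟩
    apply Subtype.ext
    funext x
    simp [LinearMap.restrict_apply]
  map_mul' := by
    intro g₁ g₂
    apply LinearMap.ext
    rintro ⟨f, hf⟩
    apply Subtype.ext
    funext x
    simp [LinearMap.restrict_apply, Module.End.mul_apply, mul_assoc]
    exact congrArg f (mul_assoc x g₁ g₂).symm

/-- `f` is the `ψ`-Whittaker vector `f_{σ,π}` of the parabolic induction `σ ∘ π`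
attached to the Whittaker vectors `ξσ`, `ξπ`: it lies in the induced space, it is a
`ψ`-Whittaker vector for right translation, it is supported on the double coset
`P_{m,n} w_{n,m} U_{m+n}`, and `f(w_{n,m}) = ξσ ⊗ ξπ`. -/
def IsInducedWhittakerVector {m n k : ℕ} (h : m + n = k)
    (σ : Representation ℂ (GL (Fin m) F) W) (π : Representation ℂ (GL (Fin n) F) V)
    (ψ : AddChar F ℂ) (ξσ : W) (ξπ : V) (f : GL (Fin k) F → W ⊗[ℂ] V) : Prop :=
  f ∈ IndSpace h σ π ∧
  (∀ u : GL (Fin k) F, IsUnip F u → ∀ g, f (g * u) = psiU ψ u • f g) ∧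
  f (wSwap F m n k h) = ξσ ⊗ₜ[ℂ] ξπ ∧
  ∀ g, f g ≠ 0 → ∃ (A : GL (Fin m) F) (B : Matrix (Fin m) (Fin n) F) (D : GL (Fin n) F)
    (u : GL (Fin k) F), IsUnip F u ∧ g = pElt F h A B D * wSwap F m n k h * u

/-- The intertwining operator `U_{σ,π} : σ ∘ π → π ∘ σ`,
`(U_{σ,π} f)(g) = Σ_{u ∈ N_{n,m}} sw(f(w_{n,m} u g))`, where `sw` is the swap of the
two tensor factors. -/
def Uop {m n k : ℕ} (h : m + n = k) (f : GL (Fin k) F → W ⊗[ℂ] V) :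
    GL (Fin k) F → V ⊗[ℂ] W := fun g =>
  ∑ X : Matrix (Fin n) (Fin m) F,
    (TensorProduct.comm ℂ W V)
      (f (wSwap F m n k h * pElt F ((add_comm n m).trans h) (1 : GL (Fin n) F) X (1 : GL (Fin m) F) * g))

/-- `γ` is the Shahidi gamma factor `Γ(π × σ, ψ)` of `π` (a representation of `GL_n(F)`)
and `σ` (a representation of `GL_m(F)`): for some (equivalently, by uniqueness of
Whittaker vectors for representations of Whittaker type, any) choice of nonzero
`ψ`-Whittaker vectors `ξπ`, `ξσ`, the intertwining operator `U_{σ,π}` sends the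
Whittaker vector `f_{σ,π}` of `σ ∘ π` to `γ • f_{π,σ}`. -/
def IsShahidiGamma {n m : ℕ} (ψ : AddChar F ℂ) (π : Representation ℂ (GL (Fin n) F) V)
    (σ : Representation ℂ (GL (Fin m) F) W) (γ : ℂ) : Prop :=
  ∃ (ξπ : V) (ξσ : W) (fσπ : GL (Fin (m + n)) F → W ⊗[ℂ] V)
    (fπσ : GL (Fin (m + n)) F → V ⊗[ℂ] W),
    ξπ ≠ 0 ∧ ξσ ≠ 0 ∧ IsWhittakerVector π ψ ξπ ∧ IsWhittakerVector σ ψ ξσ ∧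
    IsInducedWhittakerVector rfl σ π ψ ξσ ξπ fσπ ∧
    IsInducedWhittakerVector (add_comm n m) π σ ψ ξπ ξσ fπσ ∧
    ∀ g, Uop rfl fσπ g = γ • fπσ g

/-- The projection `P_ψ = |U_n|⁻¹ Σ_{u ∈ U_n} ψ(u)⁻¹ π(u)` onto the subspace of
`ψ`-Whittaker vectors. -/
def besselOp {n : ℕ} (π : Representation ℂ (GL (Fin n) F) V) (ψ : AddChar F ℂ) :
    V →ₗ[ℂ] V :=
  (Fintype.card {u : GL (Fin n) F // IsUnip F u} : ℂ)⁻¹ •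
    ∑ u : {u : GL (Fin n) F // IsUnip F u}, (psiU ψ (u : GL (Fin n) F))⁻¹ • (π (u : GL (Fin n) F))

/-- The (normalized) Bessel function `J_{π,ψ}(g) = tr(P_ψ ∘ π(g))` of an irreducible
generic representation `π`. -/
def bessel {n : ℕ} (π : Representation ℂ (GL (Fin n) F) V) (ψ : AddChar F ℂ)
    (g : GL (Fin n) F) : ℂ :=
  LinearMap.trace ℂ V (besselOp π ψ ∘ₗ π g)

variable (F)

/-- `T` is a set of representatives for the left cosets `U_n\GL_n(F)`. -/
def IsTransversal {n : ℕ} (T : Finset (GL (Fin n) F)) : Prop :=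
  ∀ g : GL (Fin n) F, ∃! t, t ∈ T ∧ ∃ u, IsUnip F u ∧ g = u * t

/-- The scalar matrix `a · I_n` as an element of `GL_n(F)`. -/
def scalarGL (n : ℕ) (a : Fˣ) : GL (Fin n) F :=
  Units.map (Matrix.scalar (Fin n)).toMonoidHom a

variable {F}

/-- The representation `π` has central character `ω`. -/
def HasCentralCharacter {n : ℕ} (π : Representation ℂ (GL (Fin n) F) V) (ω : Fˣ → ℂˣ) : Prop :=
  ∀ (a : Fˣ) (v : V), π (scalarGL F n a) v = (ω a : ℂ) • v

/-- `π` is a cuspidal representation of `GL_n(F)`: for every decomposition `n = a + b`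
with `a, b ≥ 1`, the only vector invariant under the unipotent radical `N_{a,b}` is `0`.
(This is equivalent to the corresponding condition for all compositions of `n` with at
least two parts, since the unipotent radical attached to any such composition contains
the unipotent radical `N_{a,b}` with `a` its first part.) -/
def IsCuspidal {n : ℕ} (π : Representation ℂ (GL (Fin n) F) V) : Prop :=
  ∀ (a b : ℕ) (h : a + b = n), a ≠ 0 → b ≠ 0 →
    ∀ v : V, (∀ X : Matrix (Fin a) (Fin b) F, π (pElt F h 1 X 1) v = v) → v = 0

variable (F)

/-- The group homomorphism `g ↦ ᵗg⁻¹` of `GL_k(F)`. -/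
def glTransposeInv {k : ℕ} : GL (Fin k) F →* GL (Fin k) F where
  toFun g :=
    ⟨((g⁻¹ : GL (Fin k) F) : Matrix (Fin k) (Fin k) F)ᵀ, ((g : GL (Fin k) F) : Matrix (Fin k) (Fin k) F)ᵀ,
      by rw [← Matrix.transpose_mul, Units.mul_inv, Matrix.transpose_one],
      by rw [← Matrix.transpose_mul, Units.inv_mul, Matrix.transpose_one]⟩
  map_one' := by
    apply Units.ext
    simp
  map_mul' := by
    intro g h
    apply Units.ext
    show (((g * h)⁻¹ : GL (Fin k) F) : Matrix (Fin k) (Fin k) F)ᵀ = _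
    rw [_root_.mul_inv_rev]
    show ((((h⁻¹ : GL (Fin k) F) : Matrix (Fin k) (Fin k) F) *
      ((g⁻¹ : GL (Fin k) F) : Matrix (Fin k) (Fin k) F))ᵀ) = _
    rw [Matrix.transpose_mul]
    rfl

/-- The isomorphism `GL_a(F) ≅ GL_b(F)` induced by an equality `a = b`. -/
def glCongr {a b : ℕ} (h : a = b) : GL (Fin a) F ≃* GL (Fin b) F :=
  Units.mapEquiv ((Matrix.reindexAlgEquiv F F (finCongr h)).toRingEquiv.toMulEquiv)

/-- The diagonal matrix with (invertible) diagonal entries `d`, as an element of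
`GL_k(F)`. -/
def diagGL {k : ℕ} (d : Fin k → Fˣ) : GL (Fin k) F where
  val := Matrix.diagonal fun i => (d i : F)
  inv := Matrix.diagonal fun i => (((d i)⁻¹ : Fˣ) : F)
  val_inv := by
    rw [Matrix.diagonal_mul_diagonal]
    have : (fun i => ((d i : F) * (((d i)⁻¹ : Fˣ) : F))) = fun _ => (1 : F) :=
      funext fun i => Units.mul_inv _
    rw [this, Matrix.diagonal_one]
  inv_val := by
    rw [Matrix.diagonal_mul_diagonal]
    have : (fun i => ((((d i)⁻¹ : Fˣ) : F) * (d i : F))) = fun _ => (1 : F) :=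
      funext fun i => Units.inv_mul _
    rw [this, Matrix.diagonal_one]

/-- The matrix `σ_c ∈ GL_n(F)` whose upper right `(n-1) × (n-1)` block is `I_{n-1}`
and whose `(n,1)` entry is `c` (all other entries `0`). -/
def sigmaGL (n : ℕ) (c : Fˣ) : GL (Fin n) F :=
  diagGL F (fun i => if (i : ℕ) = n - 1 then c else 1) * permGL F (finRotate n)

/-- The matrix `τ_b ∈ GL_n(F)` whose `(1,n)` entry is `b` and whose lower left
`(n-1) × (n-1)` block is `I_{n-1}` (all other entries `0`). -/
def tauGL (n : ℕ) (b : Fˣ) : GL (Fin n) F :=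
  (permGL F (finRotate n))⁻¹ * diagGL F (fun i => if (i : ℕ) = n - 1 then b else 1)

/-- The diagonal matrix `d_k = diag(1, a, a², …, a^{k-1}) ∈ GL_k(F)`. -/
def dPow (k : ℕ) (a : Fˣ) : GL (Fin k) F :=
  diagGL F (fun i => a ^ (i : ℕ))

/-- The Fourier transform `F_ψ φ(y) = Σ_{x ∈ Fⁿ} φ(x) ψ(⟨x, y⟩)` of `φ : Fⁿ → ℂ`. -/
def fourier (ψ : AddChar F ℂ) {n : ℕ} (φ : (Fin n → F) → ℂ) : (Fin n → F) → ℂ :=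
  fun y => ∑ x : Fin n → F, φ x * ψ (∑ i, x i * y i)

/-- A multiplicative character `χ` of `Fˣ`, viewed as a representation of
`GL_1(F)` on `ℂ`. -/
def charRep (χ : Fˣ →* ℂˣ) : Representation ℂ (GL (Fin 1) F) ℂ where
  toFun g := ((χ (Matrix.GeneralLinearGroup.det g) : ℂ) • LinearMap.id : ℂ →ₗ[ℂ] ℂ)
  map_one' := by
    show (χ (Matrix.GeneralLinearGroup.det (1 : GL (Fin 1) F)) : ℂ) • LinearMap.id = 1
    rw [_root_.map_one, _root_.map_one, Units.val_one, one_smul]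
    rfl
  map_mul' := by
    intro g h
    apply LinearMap.ext
    intro x
    simp [Module.End.mul_apply, smul_smul, mul_comm]

/-- The equivalence `Σ i, Fin (ns i) ≃ Fin (ns 0) ⊕ Σ i, Fin (ns i.succ)`. -/
def sigmaSuccEquiv (r : ℕ) (ns : Fin (r + 1) → ℕ) :
    (Σ i : Fin (r + 1), Fin (ns i)) ≃ (Fin (ns 0) ⊕ Σ i : Fin r, Fin (ns i.succ)) where
  toFun x := Fin.cases (motive := fun i => Fin (ns i) → (Fin (ns 0) ⊕ Σ i : Fin r, Fin (ns i.succ)))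
    (fun y => Sum.inl y) (fun i y => Sum.inr ⟨i, y⟩) x.1 x.2
  invFun := Sum.elim (fun y => ⟨0, y⟩) (fun p => ⟨p.1.succ, p.2⟩)
  left_inv := by
    rintro ⟨i, y⟩
    induction i using Fin.cases <;> simp
  right_inv := by
    rintro (y | ⟨i, y⟩) <;> simp

/-- The order preserving equivalence `Σ i, Fin (ns i) ≃ Fin (∑ i, ns i)`, sending
`⟨i, x⟩` to `ns 0 + ⋯ + ns (i-1) + x` (blocks in their natural order). -/
def finSigmaEquiv : (r : ℕ) → (ns : Fin r → ℕ) → (Σ i : Fin r, Fin (ns i)) ≃ Fin (∑ i, ns i)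
  | 0, ns =>
    (Equiv.equivOfIsEmpty _ (Fin 0)).trans
      (finCongr (show (0 : ℕ) = ∑ i : Fin 0, ns i by simp))
  | (r + 1), ns =>
    (sigmaSuccEquiv r ns).trans
      ((Equiv.sumCongr (Equiv.refl (Fin (ns 0))) (finSigmaEquiv r (fun i => ns i.succ))).trans
        (finSumFinEquiv.trans (finCongr (Fin.sum_univ_succ ns).symm)))

/-- The index in `Fin (∑ j, ns j)` of the `x`-th element of the `i`-th block. -/
def blockIdx {r : ℕ} (ns : Fin r → ℕ) (i : Fin r) (x : Fin (ns i)) : Fin (∑ j, ns j) :=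
  finSigmaEquiv r ns ⟨i, x⟩

variable {F}
variable {r : ℕ} {ns : Fin r → ℕ} {Vs : Fin r → Type}
  [∀ i, AddCommGroup (Vs i)] [∀ i, Module ℂ (Vs i)]

/-- The space of the iterated parabolic induction `τ₁ ∘ ⋯ ∘ τ_r`: functions
`f : GL_{n₁ + ⋯ + n_r}(F) → V₁ ⊗ ⋯ ⊗ V_r` such that
`f(pg) = (τ₁(d₁) ⊗ ⋯ ⊗ τ_r(d_r)) f(g)` whenever `p` is block upper triangular with
diagonal blocks `d i ∈ GL_{n_i}(F)`. -/
def MultiIndSpace (τ : ∀ i, Representation ℂ (GL (Fin (ns i)) F) (Vs i)) :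
    Submodule ℂ (GL (Fin (∑ j, ns j)) F → ⨂[ℂ] i, Vs i) where
  carrier := {f | ∀ (p : GL (Fin (∑ j, ns j)) F) (d : ∀ i, GL (Fin (ns i)) F),
    (∀ (i i' : Fin r), i' < i → ∀ (x : Fin (ns i)) (x' : Fin (ns i')),
      (p : Matrix (Fin (∑ j, ns j)) (Fin (∑ j, ns j)) F) (blockIdx ns i x) (blockIdx ns i' x') = 0) →
    (∀ (i : Fin r) (x x' : Fin (ns i)),
      (p : Matrix (Fin (∑ j, ns j)) (Fin (∑ j, ns j)) F) (blockIdx ns i x) (blockIdx ns i x')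
        = ((d i : Matrix (Fin (ns i)) (Fin (ns i)) F)) x x') →
    ∀ g, f (p * g) = PiTensorProduct.map (fun i => τ i (d i)) (f g)}
  add_mem' := by
    intro f f' hf hf' p d h1 h2 g
    simp only [Pi.add_apply, hf p d h1 h2 g, hf' p d h1 h2 g, map_add]
  zero_mem' := by intro p d h1 h2 g; simp
  smul_mem' := by
    intro c f hf p d h1 h2 g
    simp only [Pi.smul_apply, hf p d h1 h2 g, LinearMap.map_smul]

/-- The iterated parabolic induction `τ₁ ∘ ⋯ ∘ τ_r` as a representation of
`GL_{n₁ + ⋯ + n_r}(F)`, acting by right translation. -/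
def MultiIndRep (τ : ∀ i, Representation ℂ (GL (Fin (ns i)) F) (Vs i)) :
    Representation ℂ (GL (Fin (∑ j, ns j)) F) (MultiIndSpace τ) where
  toFun g := (LinearMap.funLeft ℂ (⨂[ℂ] i, Vs i) (fun x => x * g)).restrict
    (fun f hf => by
      intro p d h1 h2 x
      simp only [LinearMap.funLeft_apply]
      rw [mul_assoc]
      exact hf p d h1 h2 (x * g))
  map_one' := by
    apply LinearMap.ext
    rintro ⟨f, hf⟩
    apply Subtype.ext
    funext x
    simp [LinearMap.restrict_apply]
  map_mul' := by
    intro g₁ g₂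
    apply LinearMap.ext
    rintro ⟨f, hf⟩
    apply Subtype.ext
    funext x
    simp [LinearMap.restrict_apply, Module.End.mul_apply, mul_assoc]
    exact congrArg f (mul_assoc x g₁ g₂).symm

end GammaFF

namespace GammaFF

open Matrix
open scoped TensorProduct Classical

section Statements

variable (F : Type) [Field F] [Fintype F] [DecidableEq F]

namespace Aux3

variable {F : Type} [Field F] [Fintype F] [DecidableEq F]

lemma diagGL_val {k : ℕ} (d : Fin k → Fˣ) :
    (diagGL F d : Matrix (Fin k) (Fin k) F) = Matrix.diagonal (fun i => (d i : F)) := rfl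

lemma diagGL_mul {k : ℕ} (d d' : Fin k → Fˣ) :
    diagGL F d * diagGL F d' = diagGL F (fun i => d i * d' i) := by
  apply Units.ext
  rw [Units.val_mul, diagGL_val, diagGL_val, diagGL_val, Matrix.diagonal_mul_diagonal]
  simp

lemma diagGL_inv {k : ℕ} (d : Fin k → Fˣ) :
    (diagGL F d)⁻¹ = diagGL F (fun i => (d i)⁻¹) := by
  apply Units.ext
  rfl

lemma scalarGL_eq_diagGL (n : ℕ) (u : Fˣ) :
    scalarGL F n u = diagGL F (fun _ => u) := by
  apply Units.ext
  show Matrix.scalar (Fin n) (u : F) = _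
  rw [diagGL_val]
  rfl

lemma dPow_eq_diagGL (k : ℕ) (c : Fˣ) :
    dPow F k c = diagGL F (fun i => c ^ (i : ℕ)) := rfl

lemma dPow_inv (k : ℕ) (c : Fˣ) :
    (dPow F k c)⁻¹ = dPow F k c⁻¹ := by
  apply Units.ext
  show Matrix.diagonal _ = Matrix.diagonal _
  congr 1

lemma permGL_val {k : ℕ} (e : Equiv.Perm (Fin k)) :
    (permGL F e : Matrix (Fin k) (Fin k) F) = (e.toPEquiv).toMatrix := rfl

lemma permGL_mul_diagGL {k : ℕ} (e : Equiv.Perm (Fin k)) (d : Fin k → Fˣ) :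
    permGL F e * diagGL F d = diagGL F (fun i => d (e i)) * permGL F e := by
  apply Units.ext
  rw [Units.val_mul, Units.val_mul, permGL_val, diagGL_val, diagGL_val,
    PEquiv.toMatrix_toPEquiv_mul, PEquiv.mul_toMatrix_toPEquiv]
  ext i j
  simp only [Matrix.submatrix_apply, id_eq, Matrix.diagonal_apply]
  by_cases h : e i = j
  · subst h; simp
  · rw [if_neg h, if_neg]
    intro hij
    exact h (by rw [hij, Equiv.apply_symm_apply])

lemma blockEquiv_inl_val {m n k : ℕ} (h : m + n = k) (x : Fin m) :
    ((blockEquiv h (Sum.inl x) : Fin k) : ℕ) = (x : ℕ) := by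
  simp [blockEquiv, finSumFinEquiv]

lemma blockEquiv_inr_val {m n k : ℕ} (h : m + n = k) (y : Fin n) :
    ((blockEquiv h (Sum.inr y) : Fin k) : ℕ) = m + (y : ℕ) := by
  simp [blockEquiv, finSumFinEquiv]

lemma diagGL_eq_pElt {m n k : ℕ} (h : m + n = k) (dm : Fin m → Fˣ) (dn : Fin n → Fˣ) :
    diagGL F (fun i => Sum.elim dm dn ((blockEquiv h).symm i)) =
      pElt F h (diagGL F dm) 0 (diagGL F dn) := by
  apply Units.ext
  show _ = bmat F h _ _ _ _
  unfold bmat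
  rw [diagGL_val, diagGL_val, diagGL_val, Matrix.fromBlocks_diagonal,
    Matrix.submatrix_diagonal_equiv]
  refine congrArg Matrix.diagonal (funext fun i => ?_)
  rw [Function.comp_apply]
  cases hs : (blockEquiv h).symm i with
  | inl x => rfl
  | inr y => rfl

lemma dPow_as_pElt {m n k : ℕ} (h : m + n = k) (c : Fˣ) :
    dPow F k c = pElt F h (dPow F m c) 0 (scalarGL F n (c ^ m) * dPow F n c) := by
  rw [dPow_eq_diagGL, dPow_eq_diagGL, dPow_eq_diagGL, scalarGL_eq_diagGL, diagGL_mul]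
  rw [← diagGL_eq_pElt]
  congr 1
  funext i
  obtain ⟨s, rfl⟩ : ∃ s, blockEquiv h s = i := ⟨(blockEquiv h).symm i, Equiv.apply_symm_apply _ _⟩
  rw [Equiv.symm_apply_apply]
  rcases s with x | y
  · simp [blockEquiv_inl_val h x]
  · simp only [Sum.elim_inr, blockEquiv_inr_val h y]
    rw [pow_add]

lemma pElt_mul {a b k : ℕ} (h : a + b = k) (A A' : GL (Fin a) F)
    (B B' : Matrix (Fin a) (Fin b) F) (D D' : GL (Fin b) F) :
    pElt F h A B D * pElt F h A' B' D' =
      pElt F h (A * A')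
        ((A : Matrix (Fin a) (Fin a) F) * B' + B * (D' : Matrix (Fin b) (Fin b) F)) (D * D') := by
  apply Units.ext
  show bmat F h _ _ _ _ * bmat F h _ _ _ _ = bmat F h _ _ _ _
  rw [bmat_mul]
  congr 1 <;> simp [Units.val_mul]

lemma pElt_inv_zero {a b k : ℕ} (h : a + b = k) (A : GL (Fin a) F) (D : GL (Fin b) F) :
    (pElt F h A 0 D)⁻¹ = pElt F h A⁻¹ 0 D⁻¹ := by
  apply Units.ext
  show bmat F h _ _ _ _ = bmat F h _ _ _ _
  congr 1
  simp

lemma dPow_val {k : ℕ} (c : Fˣ) :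
    (dPow F k c : Matrix (Fin k) (Fin k) F) =
      Matrix.diagonal (fun i : Fin k => ((c ^ (i : ℕ) : Fˣ) : F)) := rfl

lemma dPow_inv_val {k : ℕ} (c : Fˣ) :
    (((dPow F k c)⁻¹ : GL (Fin k) F) : Matrix (Fin k) (Fin k) F) =
      Matrix.diagonal (fun i : Fin k => (((c ^ (i : ℕ))⁻¹ : Fˣ) : F)) := rfl

lemma wSwap_conj {m n k : ℕ} (h : m + n = k) (c : Fˣ) :
    (dPow F k c)⁻¹ * wSwap F m n k h * dPow F k c =
      pElt F h (scalarGL F m (c ^ n)) 0 ((scalarGL F n (c ^ m))⁻¹) * wSwap F m n k h := by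
  set e := ((blockEquiv h).symm.trans ((Equiv.sumComm (Fin m) (Fin n)).trans
    (blockEquiv ((add_comm n m).trans h)))) with he
  have hw : wSwap F m n k h = permGL F e := rfl
  rw [hw, dPow_eq_diagGL, diagGL_inv, mul_assoc, permGL_mul_diagGL, ← mul_assoc, diagGL_mul]
  rw [scalarGL_eq_diagGL, scalarGL_eq_diagGL, diagGL_inv, ← diagGL_eq_pElt]
  congr 2
  funext i
  obtain ⟨s, rfl⟩ : ∃ s, blockEquiv h s = i := ⟨(blockEquiv h).symm i, Equiv.apply_symm_apply _ _⟩
  rw [Equiv.symm_apply_apply]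
  have hei : e (blockEquiv h s) =
      blockEquiv ((add_comm n m).trans h) (Equiv.sumComm (Fin m) (Fin n) s) := by
    rw [he]
    simp [Equiv.trans_apply]
  rw [hei]
  rcases s with x | y
  · show (c ^ ((blockEquiv h (Sum.inl x) : Fin k) : ℕ))⁻¹ *
      c ^ ((blockEquiv ((add_comm n m).trans h) (Sum.inr x) : Fin k) : ℕ) = c ^ n
    rw [blockEquiv_inl_val, blockEquiv_inr_val, pow_add, mul_comm (c ^ n) (c ^ (x : ℕ)),
      inv_mul_cancel_left]
  · show (c ^ ((blockEquiv h (Sum.inr y) : Fin k) : ℕ))⁻¹ *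
      c ^ ((blockEquiv ((add_comm n m).trans h) (Sum.inl y) : Fin k) : ℕ) = (c ^ m)⁻¹
    rw [blockEquiv_inr_val, blockEquiv_inl_val, pow_add, mul_inv, mul_assoc, inv_mul_cancel,
      mul_one]

lemma supDiag_conj {k : ℕ} (c : Fˣ) (u : GL (Fin k) F) :
    supDiag F (((dPow F k c)⁻¹ * u * dPow F k c : GL (Fin k) F) : Matrix (Fin k) (Fin k) F)
      = (c : F) * supDiag F (u : Matrix (Fin k) (Fin k) F) := by
  rw [Units.val_mul, Units.val_mul, dPow_val, dPow_inv_val]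
  unfold supDiag
  rw [Finset.mul_sum]
  refine Finset.sum_congr rfl fun i _ => ?_
  rw [Finset.mul_sum]
  refine Finset.sum_congr rfl fun j _ => ?_
  rw [Matrix.mul_diagonal, Matrix.diagonal_mul]
  split_ifs with hij
  · have hne : ((c : F)) ^ (i : ℕ) ≠ 0 := pow_ne_zero _ (Units.ne_zero c)
    rw [Units.val_inv_eq_inv_val, Units.val_pow_eq_pow_val, Units.val_pow_eq_pow_val,
      hij, pow_succ]
    field_simp
  · rw [mul_zero]

lemma isUnip_dPow_conj {k : ℕ} (c : Fˣ) {u : GL (Fin k) F} (hu : IsUnip F u) :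
    IsUnip F ((dPow F k c)⁻¹ * u * dPow F k c) := by
  have hv : (((dPow F k c)⁻¹ * u * dPow F k c : GL (Fin k) F) : Matrix (Fin k) (Fin k) F)
      = Matrix.diagonal (fun i : Fin k => (((c ^ (i : ℕ))⁻¹ : Fˣ) : F)) * (u : Matrix (Fin k) (Fin k) F)
        * Matrix.diagonal (fun i : Fin k => ((c ^ (i : ℕ) : Fˣ) : F)) := by
    rw [Units.val_mul, Units.val_mul, dPow_val, dPow_inv_val]
  constructor
  · intro i
    rw [hv, Matrix.mul_diagonal, Matrix.diagonal_mul, hu.1 i, mul_one, ← Units.val_mul,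
      inv_mul_cancel, Units.val_one]
  · intro i j hij
    rw [hv, Matrix.mul_diagonal, Matrix.diagonal_mul, hu.2 i j hij, mul_zero, zero_mul]

lemma psiU_dPow_conj {k : ℕ} (ψ : AddChar F ℂ) (c : Fˣ) (u : GL (Fin k) F) :
    psiU ψ ((dPow F k c)⁻¹ * u * dPow F k c) = psiU (ψ.mulShift (c : F)) u := by
  unfold psiU
  rw [AddChar.mulShift_apply, supDiag_conj]

variable {V W : Type} [AddCommGroup V] [Module ℂ V] [AddCommGroup W] [Module ℂ W]

lemma isWhittaker_mulShift {n : ℕ} (π : Representation ℂ (GL (Fin n) F) V)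
    (ψ : AddChar F ℂ) (b : Fˣ) {v : V} (hv : IsWhittakerVector π ψ v) :
    IsWhittakerVector π (ψ.mulShift (b : F)) (π (dPow F n b) v) := by
  intro u hu
  have h1 : u * dPow F n b = dPow F n b * ((dPow F n b)⁻¹ * u * dPow F n b) := by group
  calc π u (π (dPow F n b) v) = π (u * dPow F n b) v := by
        rw [_root_.map_mul, Module.End.mul_apply]
    _ = π (dPow F n b) (π ((dPow F n b)⁻¹ * u * dPow F n b) v) := by
        rw [h1, _root_.map_mul, Module.End.mul_apply]
    _ = π (dPow F n b) (psiU ψ ((dPow F n b)⁻¹ * u * dPow F n b) • v) := by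
        rw [hv _ (isUnip_dPow_conj b hu)]
    _ = psiU (ψ.mulShift (b : F)) u • π (dPow F n b) v := by
        rw [_root_.map_smul, psiU_dPow_conj]

lemma mulShift_inv_mulShift (ψ : AddChar F ℂ) (b : Fˣ) :
    (ψ.mulShift (b : F)).mulShift ((b⁻¹ : Fˣ) : F) = ψ := by
  rw [AddChar.mulShift_mulShift, Units.mul_inv, AddChar.mulShift_one]

lemma whittakerType_mulShift {n : ℕ} (π : Representation ℂ (GL (Fin n) F) V)
    (ψ : AddChar F ℂ) (b : Fˣ) (h : WhittakerType π ψ) :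
    WhittakerType π (ψ.mulShift (b : F)) := by
  obtain ⟨v₀, hv0, hW, hspan⟩ := h
  refine ⟨π (dPow F n b) v₀, ?_, isWhittaker_mulShift π ψ b hW, ?_⟩
  · intro hz
    apply hv0
    have : π ((dPow F n b)⁻¹) (π (dPow F n b) v₀) = v₀ := by
      rw [← Module.End.mul_apply, ← _root_.map_mul, inv_mul_cancel, _root_.map_one, Module.End.one_apply]
    rw [← this, hz, _root_.map_zero]
  · intro w hw
    have hw' : IsWhittakerVector π ψ (π (dPow F n b⁻¹) w) := by
      have := isWhittaker_mulShift π (ψ.mulShift (b : F)) b⁻¹ hw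
      rwa [mulShift_inv_mulShift] at this
    obtain ⟨cst, hc⟩ := hspan _ hw'
    refine ⟨cst, ?_⟩
    have hwb : π (dPow F n b) (π (dPow F n b⁻¹) w) = w := by
      rw [← dPow_inv, ← Module.End.mul_apply, ← _root_.map_mul, mul_inv_cancel, _root_.map_one,
        Module.End.one_apply]
    rw [← hwb, hc, _root_.map_smul]

lemma tmul_ne_zero' {v : V} {w : W} (hv : v ≠ 0) (hw : w ≠ 0) : v ⊗ₜ[ℂ] w ≠ 0 := by
  obtain ⟨φ, hφ⟩ : ∃ φ : Module.Dual ℂ V, φ v ≠ 0 := by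
    by_contra hc
    push_neg at hc
    exact hv ((Module.forall_dual_apply_eq_zero_iff ℂ v).mp hc)
  obtain ⟨χ, hχ⟩ : ∃ χ : Module.Dual ℂ W, χ w ≠ 0 := by
    by_contra hc
    push_neg at hc
    exact hw ((Module.forall_dual_apply_eq_zero_iff ℂ w).mp hc)
  intro h0
  have h2 : (TensorProduct.lid ℂ ℂ) (TensorProduct.map φ χ (v ⊗ₜ[ℂ] w)) = 0 := by
    rw [h0]
    simp
  rw [TensorProduct.map_tmul, TensorProduct.lid_tmul, smul_eq_mul] at h2
  exact mul_ne_zero hφ hχ h2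

lemma central_smul_pow {n : ℕ} (π : Representation ℂ (GL (Fin n) F) V) {ω : Fˣ → ℂˣ}
    (hω : HasCentralCharacter π ω) (b : Fˣ) (j : ℕ) (v : V) :
    π (scalarGL F n (b ^ j)) v = ((ω b : ℂ) ^ j) • v := by
  induction j with
  | zero =>
    have h1 : scalarGL F n ((1 : Fˣ)) = 1 := by
      unfold scalarGL
      exact _root_.map_one _
    rw [pow_zero, h1, _root_.map_one, Module.End.one_apply, pow_zero, one_smul]
  | succ j ih =>
    have h1 : scalarGL F n (b ^ j * b) = scalarGL F n (b ^ j) * scalarGL F n b := by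
      unfold scalarGL
      exact _root_.map_mul _ _ _
    rw [pow_succ, h1, _root_.map_mul, Module.End.mul_apply, hω b v, _root_.map_smul, ih,
      smul_smul, pow_succ, mul_comm]

lemma central_smul_pow_inv {n : ℕ} (π : Representation ℂ (GL (Fin n) F) V) {ω : Fˣ → ℂˣ}
    (hω : HasCentralCharacter π ω) (b : Fˣ) (j : ℕ) (v : V) :
    π ((scalarGL F n (b ^ j))⁻¹) v = (((ω b : ℂ) ^ j)⁻¹) • v := by
  have h0 : π (scalarGL F n (b ^ j)) (π ((scalarGL F n (b ^ j))⁻¹) v) = v := by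
    rw [← Module.End.mul_apply, ← _root_.map_mul, mul_inv_cancel, _root_.map_one, Module.End.one_apply]
  have h1 := central_smul_pow π hω b j (π ((scalarGL F n (b ^ j))⁻¹) v)
  rw [h0] at h1
  have h2 : (((ω b : ℂ) ^ j)⁻¹) • ((ω b : ℂ) ^ j • π ((scalarGL F n (b ^ j))⁻¹) v)
      = π ((scalarGL F n (b ^ j))⁻¹) v := by
    rw [smul_smul, inv_mul_cancel₀ (pow_ne_zero _ (Units.ne_zero _)), one_smul]
  rw [← h2, ← h1]

lemma comm_map (f : W →ₗ[ℂ] W) (g : V →ₗ[ℂ] V) (t : W ⊗[ℂ] V) :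
    TensorProduct.comm ℂ W V (TensorProduct.map f g t) =
      TensorProduct.map g f (TensorProduct.comm ℂ W V t) := by
  have h : (TensorProduct.comm ℂ W V).toLinearMap ∘ₗ TensorProduct.map f g
      = (TensorProduct.map g f) ∘ₗ (TensorProduct.comm ℂ W V).toLinearMap := by
    apply TensorProduct.ext'
    intro x y
    simp
  exact DFunLike.congr_fun h t

lemma map_rep_mul {m n : ℕ} (σ : Representation ℂ (GL (Fin m) F) W)
    (π : Representation ℂ (GL (Fin n) F) V) (X Y : GL (Fin m) F) (Z T : GL (Fin n) F)
    (t : W ⊗[ℂ] V) :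
    TensorProduct.map (σ (X * Y)) (π (Z * T)) t
      = TensorProduct.map (σ X) (π Z) (TensorProduct.map (σ Y) (π T) t) := by
  rw [_root_.map_mul, _root_.map_mul, Module.End.mul_eq_comp, Module.End.mul_eq_comp,
    TensorProduct.map_comp, LinearMap.comp_apply]

lemma induced_value {m n k : ℕ} (h : m + n = k) (σ : Representation ℂ (GL (Fin m) F) W)
    (π : Representation ℂ (GL (Fin n) F) V) (ψ : AddChar F ℂ) (ξσ : W) (ξπ : V)
    {f : GL (Fin k) F → W ⊗[ℂ] V} (hf : IsInducedWhittakerVector h σ π ψ ξσ ξπ f)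
    (A : GL (Fin m) F) (B : Matrix (Fin m) (Fin n) F) (D : GL (Fin n) F)
    {u : GL (Fin k) F} (hu : IsUnip F u) :
    f (pElt F h A B D * wSwap F m n k h * u)
      = psiU ψ u • TensorProduct.map (σ A) (π D) (ξσ ⊗ₜ[ℂ] ξπ) := by
  obtain ⟨hmem, hwh, hval, -⟩ := hf
  have hmem' : ∀ (A : GL (Fin m) F) (B : Matrix (Fin m) (Fin n) F) (D : GL (Fin n) F)
      (g : GL (Fin k) F), f (pElt F h A B D * g) =
        TensorProduct.map (σ A) (π D) (f g) := hmem
  rw [mul_assoc, hmem' A B D _, hwh u hu _, hval, _root_.map_smul]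

lemma induced_unique {m n k : ℕ} (h : m + n = k) (σ : Representation ℂ (GL (Fin m) F) W)
    (π : Representation ℂ (GL (Fin n) F) V) (ψ : AddChar F ℂ) {ξσ ξσ' : W} {ξπ ξπ' : V}
    {f f' : GL (Fin k) F → W ⊗[ℂ] V} {c : ℂ}
    (hf : IsInducedWhittakerVector h σ π ψ ξσ ξπ f)
    (hf' : IsInducedWhittakerVector h σ π ψ ξσ' ξπ' f')
    (hc : ξσ' ⊗ₜ[ℂ] ξπ' = c • (ξσ ⊗ₜ[ℂ] ξπ)) :
    ∀ g, f' g = c • f g := by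
  intro g
  by_cases hg : ∃ (A : GL (Fin m) F) (B : Matrix (Fin m) (Fin n) F) (D : GL (Fin n) F)
      (u : GL (Fin k) F), IsUnip F u ∧ g = pElt F h A B D * wSwap F m n k h * u
  · obtain ⟨A, B, D, u, hu, rfl⟩ := hg
    rw [induced_value h σ π ψ ξσ ξπ hf A B D hu, induced_value h σ π ψ ξσ' ξπ' hf' A B D hu,
      hc, _root_.map_smul, smul_comm]
  · have h1 : f g = 0 := by
      by_contra hne
      exact hg (hf.2.2.2 g hne)
    have h2 : f' g = 0 := by
      by_contra hne
      exact hg (hf'.2.2.2 g hne)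
    rw [h1, h2, smul_zero]

lemma Uop_smul {m n k : ℕ} (h : m + n = k) (c : ℂ) (f : GL (Fin k) F → W ⊗[ℂ] V)
    (g : GL (Fin k) F) :
    Uop h (fun x => c • f x) g = c • Uop h f g := by
  unfold Uop
  rw [Finset.smul_sum]
  exact Finset.sum_congr rfl fun X _ => _root_.map_smul _ _ _

lemma gamma_unique {n m : ℕ} (ψ : AddChar F ℂ) (π : Representation ℂ (GL (Fin n) F) V)
    (σ : Representation ℂ (GL (Fin m) F) W) (hπ : WhittakerType π ψ) (hσ : WhittakerType σ ψ)
    {γ₁ γ₂ : ℂ} (h1 : IsShahidiGamma ψ π σ γ₁) (h2 : IsShahidiGamma ψ π σ γ₂) : γ₁ = γ₂ := by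
  obtain ⟨ξπ1, ξσ1, f1, g1, hξπ1, hξσ1, hWπ1, hWσ1, hI1, hJ1, hU1⟩ := h1
  obtain ⟨ξπ2, ξσ2, f2, g2, hξπ2, hξσ2, hWπ2, hWσ2, hI2, hJ2, hU2⟩ := h2
  obtain ⟨vπ, hvπ, hWvπ, hspanπ⟩ := hπ
  obtain ⟨vσ, hvσ, hWvσ, hspanσ⟩ := hσ
  obtain ⟨c1, rfl⟩ := hspanπ _ hWπ1
  obtain ⟨c2, rfl⟩ := hspanπ _ hWπ2
  obtain ⟨d1, rfl⟩ := hspanσ _ hWσ1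
  obtain ⟨d2, rfl⟩ := hspanσ _ hWσ2
  have hc1 : c1 ≠ 0 := fun hz => hξπ1 (by rw [hz, zero_smul])
  have hc2 : c2 ≠ 0 := fun hz => hξπ2 (by rw [hz, zero_smul])
  have hd1 : d1 ≠ 0 := fun hz => hξσ1 (by rw [hz, zero_smul])
  have hd2 : d2 ≠ 0 := fun hz => hξσ2 (by rw [hz, zero_smul])
  set cπ : ℂ := c2 * c1⁻¹ with hcπ
  set cσ : ℂ := d2 * d1⁻¹ with hcσ
  have hcπ0 : cπ ≠ 0 := mul_ne_zero hc2 (inv_ne_zero hc1)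
  have hcσ0 : cσ ≠ 0 := mul_ne_zero hd2 (inv_ne_zero hd1)
  have hπ12 : c2 • vπ = cπ • (c1 • vπ) := by
    rw [smul_smul, hcπ, mul_assoc, inv_mul_cancel₀ hc1, mul_one]
  have hσ12 : d2 • vσ = cσ • (d1 • vσ) := by
    rw [smul_smul, hcσ, mul_assoc, inv_mul_cancel₀ hd1, mul_one]
  have htm1 : (d2 • vσ) ⊗ₜ[ℂ] (c2 • vπ) = (cσ * cπ) • ((d1 • vσ) ⊗ₜ[ℂ] (c1 • vπ)) := by
    simp only [TensorProduct.smul_tmul', TensorProduct.tmul_smul, smul_smul]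
    congr 1
    rw [hcπ, hcσ]
    congr 1
    field_simp
    try ring
  have htm2 : (c2 • vπ) ⊗ₜ[ℂ] (d2 • vσ) = (cσ * cπ) • ((c1 • vπ) ⊗ₜ[ℂ] (d1 • vσ)) := by
    simp only [TensorProduct.smul_tmul', TensorProduct.tmul_smul, smul_smul]
    congr 1
    rw [hcπ, hcσ]
    congr 1
    field_simp
    try ring
  have hf21 := induced_unique rfl σ π ψ hI1 hI2 htm1
  have hg21 := induced_unique (add_comm n m) π σ ψ hJ1 hJ2 htm2
  set w' := wSwap F n m (m + n) (add_comm n m) with hw'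
  have hE : Uop rfl f2 w' = γ₂ • g2 w' := hU2 w'
  have hfeq : f2 = fun x => (cσ * cπ) • f1 x := funext hf21
  rw [hfeq, Uop_smul, hU1 w', hg21 w'] at hE
  have hg1w : g1 w' = (c1 • vπ) ⊗ₜ[ℂ] (d1 • vσ) := hJ1.2.2.1
  have hne : g1 w' ≠ 0 := by
    rw [hg1w]
    exact tmul_ne_zero' hξπ1 hξσ1
  rw [smul_smul, smul_smul] at hE
  have := smul_left_injective ℂ hne hE
  have h3 : γ₁ * (cσ * cπ) = γ₂ * (cσ * cπ) := by rw [← this]; ring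
  exact mul_right_cancel₀ (mul_ne_zero hcσ0 hcπ0) h3

lemma pElt_conj_diag {a c k : ℕ} (h : a + c = k) (P Q : GL (Fin a) F) (R S : GL (Fin c) F)
    (A : GL (Fin a) F) (B : Matrix (Fin a) (Fin c) F) (D : GL (Fin c) F) :
    pElt F h P 0 R * pElt F h A B D * pElt F h Q 0 S =
      pElt F h (P * A * Q)
        ((P : Matrix (Fin a) (Fin a) F) * B * (S : Matrix (Fin c) (Fin c) F)) (R * D * S) := by
  rw [pElt_mul, pElt_mul]
  congr 1
  rw [Matrix.mul_zero, Matrix.zero_mul, zero_add, add_zero]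

lemma induced_transport {m n k : ℕ} (h : m + n = k) (σ : Representation ℂ (GL (Fin m) F) W)
    (π : Representation ℂ (GL (Fin n) F) V) (ψ : AddChar F ℂ) (b : Fˣ) {ωσ ωπ : Fˣ → ℂˣ}
    (hωσ : HasCentralCharacter σ ωσ) (hωπ : HasCentralCharacter π ωπ)
    (ξσ : W) (ξπ : V) (f : GL (Fin k) F → W ⊗[ℂ] V)
    (hf : IsInducedWhittakerVector h σ π ψ ξσ ξπ f) :
    IsInducedWhittakerVector h σ π (ψ.mulShift (b : F)) (σ (dPow F m b) ξσ) (π (dPow F n b) ξπ)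
      (fun g => (((ωσ b : ℂ)) ^ n)⁻¹ •
        TensorProduct.map (σ (dPow F m b)) (π (scalarGL F n (b ^ m) * dPow F n b))
          (f ((dPow F k b)⁻¹ * g * dPow F k b))) := by
  obtain ⟨hmem, hwh, hval, hsupp⟩ := hf
  have hmem' : ∀ (A : GL (Fin m) F) (B : Matrix (Fin m) (Fin n) F) (D : GL (Fin n) F)
      (g : GL (Fin k) F), f (pElt F h A B D * g) =
        TensorProduct.map (σ A) (π D) (f g) := hmem
  set E := dPow F k b with hEdef
  set Am := dPow F m b with hAm
  set Dn := scalarGL F n (b ^ m) * dPow F n b with hDn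
  have hE : E = pElt F h Am 0 Dn := dPow_as_pElt h b
  have hEinv : E⁻¹ = pElt F h Am⁻¹ 0 Dn⁻¹ := by rw [hE, pElt_inv_zero]
  have hconj : ∀ (A : GL (Fin m) F) (B : Matrix (Fin m) (Fin n) F) (D : GL (Fin n) F),
      E⁻¹ * pElt F h A B D * E =
        pElt F h (Am⁻¹ * A * Am)
          ((Am⁻¹ : GL (Fin m) F).val * B * (Dn : GL (Fin n) F).val) (Dn⁻¹ * D * Dn) := by
    intro A B D
    rw [hEinv]
    nth_rewrite 1 [hE]
    exact pElt_conj_diag h Am⁻¹ Am Dn⁻¹ Dn A B D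
  set s : ℂ := (((ωσ b : ℂ)) ^ n)⁻¹ with hs
  refine ⟨?_, ?_, ?_, ?_⟩
  · intro A B D g
    show s • TensorProduct.map (σ Am) (π Dn) (f (E⁻¹ * (pElt F h A B D * g) * E)) =
      TensorProduct.map (σ A) (π D)
        (s • TensorProduct.map (σ Am) (π Dn) (f (E⁻¹ * g * E)))
    have harg : E⁻¹ * (pElt F h A B D * g) * E =
        (E⁻¹ * pElt F h A B D * E) * (E⁻¹ * g * E) := by group
    rw [harg, hconj A B D, hmem' _ _ _ (E⁻¹ * g * E), _root_.map_smul]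
    congr 1
    have e1 : Am * (Am⁻¹ * A * Am) = A * Am := by group
    have e2 : Dn * (Dn⁻¹ * D * Dn) = D * Dn := by group
    rw [← map_rep_mul, e1, e2, map_rep_mul]
  · intro u hu g
    show s • TensorProduct.map (σ Am) (π Dn) (f (E⁻¹ * (g * u) * E)) =
      psiU (ψ.mulShift (b : F)) u •
        (s • TensorProduct.map (σ Am) (π Dn) (f (E⁻¹ * g * E)))
    have harg : E⁻¹ * (g * u) * E = (E⁻¹ * g * E) * (E⁻¹ * u * E) := by group
    rw [harg, hwh _ (isUnip_dPow_conj b hu) _, _root_.map_smul, psiU_dPow_conj, smul_comm]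
  · show s • TensorProduct.map (σ Am) (π Dn) (f (E⁻¹ * wSwap F m n k h * E)) = _
    rw [hEdef, wSwap_conj h b, hmem' _ _ _ _, hval, TensorProduct.map_tmul,
      central_smul_pow σ hωσ b n ξσ, central_smul_pow_inv π hωπ b m ξπ,
      TensorProduct.map_tmul, _root_.map_smul, _root_.map_smul]
    have hDnval : π Dn ξπ = ((ωπ b : ℂ) ^ m) • π (dPow F n b) ξπ := by
      rw [hDn, _root_.map_mul, Module.End.mul_apply, central_smul_pow π hωπ b m]
    rw [hDnval]
    simp only [TensorProduct.smul_tmul', TensorProduct.tmul_smul, smul_smul]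
    have hS : s * (((ωπ b : ℂ) ^ m)⁻¹ * (ωπ b : ℂ) ^ m * (ωσ b : ℂ) ^ n) = 1 := by
      rw [hs]
      field_simp
    rw [hS, one_smul]
  · intro g hg
    have hne : f (E⁻¹ * g * E) ≠ 0 := by
      intro h0
      apply hg
      show s • TensorProduct.map (σ Am) (π Dn) (f (E⁻¹ * g * E)) = 0
      rw [h0, _root_.map_zero, smul_zero]
    obtain ⟨A, B, D, u, hu, hdecomp⟩ := hsupp _ hne
    have hg' : g = E * (pElt F h A B D * wSwap F m n k h * u) * E⁻¹ := by
      rw [← hdecomp]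
      group
    have hw2 : E * wSwap F m n k h * E⁻¹ =
        pElt F h (scalarGL F m ((b⁻¹) ^ n)) 0 ((scalarGL F n ((b⁻¹) ^ m))⁻¹) *
          wSwap F m n k h := by
      have h3 := wSwap_conj (F := F) h b⁻¹
      rw [← dPow_inv, inv_inv, ← hEdef] at h3
      exact h3
    have hp : E * pElt F h A B D * E⁻¹ =
        pElt F h (Am * A * Am⁻¹)
          ((Am : GL (Fin m) F).val * B * (Dn⁻¹ : GL (Fin n) F).val) (Dn * D * Dn⁻¹) := by
      rw [hEinv]
      nth_rewrite 1 [hE]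
      exact pElt_conj_diag h Am Am⁻¹ Dn Dn⁻¹ A B D
    have hu' : IsUnip F (E * u * E⁻¹) := by
      have h4 := isUnip_dPow_conj (k := k) b⁻¹ hu
      rwa [← dPow_inv, inv_inv, ← hEdef] at h4
    have hcomb : g = (pElt F h (Am * A * Am⁻¹)
          ((Am : GL (Fin m) F).val * B * (Dn⁻¹ : GL (Fin n) F).val) (Dn * D * Dn⁻¹) *
        pElt F h (scalarGL F m ((b⁻¹) ^ n)) 0 ((scalarGL F n ((b⁻¹) ^ m))⁻¹)) *
        wSwap F m n k h * (E * u * E⁻¹) := by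
      calc g = (E * pElt F h A B D * E⁻¹) * (E * wSwap F m n k h * E⁻¹) * (E * u * E⁻¹) := by
            rw [hg']
            group
        _ = _ := by
            rw [hp, hw2]
            group
    rw [pElt_mul] at hcomb
    exact ⟨_, _, _, _, hu', hcomb⟩

lemma dPow_mul_scalarGL (m j : ℕ) (b : Fˣ) :
    dPow F m b * scalarGL F m (b ^ j) = scalarGL F m (b ^ j) * dPow F m b := by
  rw [scalarGL_eq_diagGL, dPow_eq_diagGL, diagGL_mul, diagGL_mul]
  congr 1
  funext i
  exact mul_comm _ _

lemma scalarGL_dPow_mul_inv (n j : ℕ) (b : Fˣ) :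
    (scalarGL F n (b ^ j) * dPow F n b) * (scalarGL F n (b ^ j))⁻¹ = dPow F n b := by
  rw [scalarGL_eq_diagGL, dPow_eq_diagGL, diagGL_inv, diagGL_mul, diagGL_mul]
  congr 1
  funext i
  rw [mul_comm (b ^ j) (b ^ (i : ℕ)), mul_assoc, mul_inv_cancel, mul_one]

lemma Uop_transport {m n : ℕ} (σ : Representation ℂ (GL (Fin m) F) W)
    (π : Representation ℂ (GL (Fin n) F) V) (ψ : AddChar F ℂ) (b : Fˣ)
    (ωσ ωπ : Fˣ → ℂˣ) (ξσ : W) (ξπ : V)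
    (fσπ : GL (Fin (m + n)) F → W ⊗[ℂ] V) (fπσ : GL (Fin (m + n)) F → V ⊗[ℂ] W)
    (hfσπ : IsInducedWhittakerVector rfl σ π ψ ξσ ξπ fσπ)
    (γ : ℂ) (hU : ∀ g, Uop rfl fσπ g = γ • fπσ g) (g : GL (Fin (m + n)) F) :
    Uop rfl (fun x => (((ωσ b : ℂ)) ^ n)⁻¹ •
        TensorProduct.map (σ (dPow F m b)) (π (scalarGL F n (b ^ m) * dPow F n b))
          (fσπ ((dPow F (m + n) b)⁻¹ * x * dPow F (m + n) b))) g =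
      ((ωπ b : ℂ) ^ m * (((ωσ b : ℂ)) ^ n)⁻¹ * γ) •
        ((((ωπ b : ℂ)) ^ m)⁻¹ •
          TensorProduct.map (π (dPow F n b)) (σ (scalarGL F m (b ^ n) * dPow F m b))
            (fπσ ((dPow F (m + n) b)⁻¹ * g * dPow F (m + n) b))) := by
  have hmem' : ∀ (A : GL (Fin m) F) (B : Matrix (Fin m) (Fin n) F) (D : GL (Fin n) F)
      (x : GL (Fin (m + n)) F), fσπ (pElt F rfl A B D * x) =
        TensorProduct.map (σ A) (π D) (fσπ x) := hfσπ.1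
  set s : ℂ := (((ωσ b : ℂ)) ^ n)⁻¹ with hs
  set E := dPow F (m + n) b with hEdef
  set w := wSwap F m n (m + n) rfl with hw
  set h'' := E⁻¹ * g * E with hh
  have hEp : E = pElt F ((add_comm n m).trans rfl) (dPow F n b) 0
      (scalarGL F m (b ^ n) * dPow F m b) := dPow_as_pElt _ b
  have hEpinv : E⁻¹ = pElt F ((add_comm n m).trans rfl) (dPow F n b)⁻¹ 0
      (scalarGL F m (b ^ n) * dPow F m b)⁻¹ := by
    rw [hEp, pElt_inv_zero]
  have hBnmat : (dPow F n b : Matrix (Fin n) (Fin n) F) *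
      (((dPow F n b)⁻¹ : GL (Fin n) F) : Matrix (Fin n) (Fin n) F) = 1 := by
    rw [← Units.val_mul, mul_inv_cancel, Units.val_one]
  have hBnmat' : (((dPow F n b)⁻¹ : GL (Fin n) F) : Matrix (Fin n) (Fin n) F) *
      (dPow F n b : Matrix (Fin n) (Fin n) F) = 1 := by
    rw [← Units.val_mul, inv_mul_cancel, Units.val_one]
  have hBmmat : ((scalarGL F m (b ^ n) * dPow F m b : GL (Fin m) F) : Matrix (Fin m) (Fin m) F) *
      (((scalarGL F m (b ^ n) * dPow F m b)⁻¹ : GL (Fin m) F) : Matrix (Fin m) (Fin m) F)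
        = 1 := by
    rw [← Units.val_mul, mul_inv_cancel, Units.val_one]
  have hBmmat' : (((scalarGL F m (b ^ n) * dPow F m b)⁻¹ : GL (Fin m) F) :
        Matrix (Fin m) (Fin m) F) *
      ((scalarGL F m (b ^ n) * dPow F m b : GL (Fin m) F) : Matrix (Fin m) (Fin m) F) = 1 := by
    rw [← Units.val_mul, inv_mul_cancel, Units.val_one]
  set eqX : Matrix (Fin n) (Fin m) F ≃ Matrix (Fin n) (Fin m) F :=
    { toFun := fun X => (((dPow F n b)⁻¹ : GL (Fin n) F) : Matrix (Fin n) (Fin n) F) * X *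
        ((scalarGL F m (b ^ n) * dPow F m b : GL (Fin m) F) : Matrix (Fin m) (Fin m) F)
      invFun := fun Y => (dPow F n b : Matrix (Fin n) (Fin n) F) * Y *
        (((scalarGL F m (b ^ n) * dPow F m b)⁻¹ : GL (Fin m) F) : Matrix (Fin m) (Fin m) F)
      left_inv := by
        intro X
        simp only [← Matrix.mul_assoc]
        rw [hBnmat, Matrix.one_mul, Matrix.mul_assoc, hBmmat, Matrix.mul_one]
      right_inv := by
        intro Y
        simp only [← Matrix.mul_assoc]
        rw [hBnmat', Matrix.one_mul, Matrix.mul_assoc, hBmmat', Matrix.mul_one] } with heqX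
  have hAmB : dPow F m b * scalarGL F m (b ^ n) = scalarGL F m (b ^ n) * dPow F m b :=
    dPow_mul_scalarGL m n b
  have hDnB : (scalarGL F n (b ^ m) * dPow F n b) * (scalarGL F n (b ^ m))⁻¹ = dPow F n b :=
    scalarGL_dPow_mul_inv n m b
  have hterm : ∀ X : Matrix (Fin n) (Fin m) F,
      (TensorProduct.comm ℂ W V) (s • TensorProduct.map (σ (dPow F m b))
          (π (scalarGL F n (b ^ m) * dPow F n b))
          (fσπ (E⁻¹ * (w * pElt F ((add_comm n m).trans rfl) 1 X 1 * g) * E))) =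
        s • TensorProduct.map (π (dPow F n b)) (σ (scalarGL F m (b ^ n) * dPow F m b))
          ((TensorProduct.comm ℂ W V)
            (fσπ (w * pElt F ((add_comm n m).trans rfl) 1 (eqX X) 1 * h''))) := by
    intro X
    have harg : E⁻¹ * (w * pElt F ((add_comm n m).trans rfl) 1 X 1 * g) * E =
        (E⁻¹ * w * E) * (E⁻¹ * pElt F ((add_comm n m).trans rfl) 1 X 1 * E) * h'' := by
      rw [hh]
      group
    have hwE : E⁻¹ * w * E = pElt F rfl (scalarGL F m (b ^ n)) 0
        ((scalarGL F n (b ^ m))⁻¹) * w := wSwap_conj rfl b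
    have hpXE : E⁻¹ * pElt F ((add_comm n m).trans rfl) 1 X 1 * E =
        pElt F ((add_comm n m).trans rfl) 1 (eqX X) 1 := by
      rw [hEpinv]
      nth_rewrite 1 [hEp]
      rw [pElt_conj_diag]
      congr 1 <;> group
    have hassoc : (pElt F rfl (scalarGL F m (b ^ n)) 0 ((scalarGL F n (b ^ m))⁻¹) * w) *
        pElt F ((add_comm n m).trans rfl) 1 (eqX X) 1 * h'' =
        pElt F rfl (scalarGL F m (b ^ n)) 0 ((scalarGL F n (b ^ m))⁻¹) *
          (w * pElt F ((add_comm n m).trans rfl) 1 (eqX X) 1 * h'') := by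
      group
    rw [harg, hwE, hpXE, hassoc, hmem', _root_.map_smul]
    congr 1
    rw [← map_rep_mul, hAmB, hDnB, comm_map]
  calc Uop rfl (fun x => s • TensorProduct.map (σ (dPow F m b))
          (π (scalarGL F n (b ^ m) * dPow F n b)) (fσπ (E⁻¹ * x * E))) g
      = ∑ X : Matrix (Fin n) (Fin m) F,
          s • TensorProduct.map (π (dPow F n b)) (σ (scalarGL F m (b ^ n) * dPow F m b))
          ((TensorProduct.comm ℂ W V)
            (fσπ (w * pElt F ((add_comm n m).trans rfl) 1 (eqX X) 1 * h''))) := by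
        unfold Uop
        exact Finset.sum_congr rfl fun X _ => hterm X
    _ = ∑ Y : Matrix (Fin n) (Fin m) F,
          s • TensorProduct.map (π (dPow F n b)) (σ (scalarGL F m (b ^ n) * dPow F m b))
          ((TensorProduct.comm ℂ W V)
            (fσπ (w * pElt F ((add_comm n m).trans rfl) 1 Y 1 * h''))) :=
        Equiv.sum_comp eqX (fun Y : Matrix (Fin n) (Fin m) F =>
          s • TensorProduct.map (π (dPow F n b)) (σ (scalarGL F m (b ^ n) * dPow F m b))
          ((TensorProduct.comm ℂ W V)
            (fσπ (w * pElt F ((add_comm n m).trans rfl) 1 Y 1 * h''))))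
    _ = s • TensorProduct.map (π (dPow F n b)) (σ (scalarGL F m (b ^ n) * dPow F m b))
          (∑ Y : Matrix (Fin n) (Fin m) F, (TensorProduct.comm ℂ W V)
            (fσπ (w * pElt F ((add_comm n m).trans rfl) 1 Y 1 * h''))) := by
        rw [← Finset.smul_sum, ← map_sum]
    _ = s • TensorProduct.map (π (dPow F n b)) (σ (scalarGL F m (b ^ n) * dPow F m b))
          (Uop rfl fσπ h'') := rfl
    _ = s • TensorProduct.map (π (dPow F n b)) (σ (scalarGL F m (b ^ n) * dPow F m b))
          (γ • fπσ h'') := by rw [hU h'']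
    _ = ((ωπ b : ℂ) ^ m * s * γ) • ((((ωπ b : ℂ)) ^ m)⁻¹ •
          TensorProduct.map (π (dPow F n b)) (σ (scalarGL F m (b ^ n) * dPow F m b))
            (fπσ h'')) := by
        rw [_root_.map_smul, smul_smul, smul_smul]
        congr 1
        have h0 : ((ωπ b : ℂ)) ^ m ≠ 0 := pow_ne_zero _ (Units.ne_zero _)
        field_simp
        try ring

end Aux3
theorem statement3
    (ψ : AddChar F ℂ) (hψ : ψ ≠ 1)
    {n m : ℕ} (hn : n ≠ 0) (hm : m ≠ 0)
    {V W : Type} [AddCommGroup V] [Module ℂ V] [FiniteDimensional ℂ V]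
    [AddCommGroup W] [Module ℂ W] [FiniteDimensional ℂ W]
    (π : Representation ℂ (GL (Fin n) F) V) (σ : Representation ℂ (GL (Fin m) F) W)
    (hπ : WhittakerType π ψ) (hσ : WhittakerType σ ψ)
    (ωπ ωσ : Fˣ → ℂˣ)
    (hωπ : HasCentralCharacter π ωπ) (hωσ : HasCentralCharacter σ ωσ)
    (a : Fˣ) :
    ∀ γa γ : ℂ,
      IsShahidiGamma (ψ.mulShift (a : F)) π σ γa → IsShahidiGamma ψ π σ γ →
      γa = (ωπ a : ℂ) ^ m * ((ωσ a : ℂ) ^ n)⁻¹ * γ := by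
  intro γa γ hγa hγ
  obtain ⟨ξπ, ξσ, fσπ, fπσ, hξπ, hξσ, hWπ, hWσ, hIσπ, hIπσ, hU⟩ := hγ
  have hξπ' : π (dPow F n a) ξπ ≠ 0 := by
    intro hz
    apply hξπ
    have h1 : π ((dPow F n a)⁻¹) (π (dPow F n a) ξπ) = ξπ := by
      rw [← Module.End.mul_apply, ← _root_.map_mul, inv_mul_cancel, _root_.map_one,
        Module.End.one_apply]
    rw [← h1, hz, _root_.map_zero]
  have hξσ' : σ (dPow F m a) ξσ ≠ 0 := by
    intro hz
    apply hξσ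
    have h1 : σ ((dPow F m a)⁻¹) (σ (dPow F m a) ξσ) = ξσ := by
      rw [← Module.End.mul_apply, ← _root_.map_mul, inv_mul_cancel, _root_.map_one,
        Module.End.one_apply]
    rw [← h1, hz, _root_.map_zero]
  have hconstr : IsShahidiGamma (ψ.mulShift (a : F)) π σ
      ((ωπ a : ℂ) ^ m * ((ωσ a : ℂ) ^ n)⁻¹ * γ) := by
    refine ⟨π (dPow F n a) ξπ, σ (dPow F m a) ξσ,
      (fun g => (((ωσ a : ℂ)) ^ n)⁻¹ • TensorProduct.map (σ (dPow F m a))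
        (π (scalarGL F n (a ^ m) * dPow F n a))
        (fσπ ((dPow F (m + n) a)⁻¹ * g * dPow F (m + n) a))),
      (fun g => (((ωπ a : ℂ)) ^ m)⁻¹ • TensorProduct.map (π (dPow F n a))
        (σ (scalarGL F m (a ^ n) * dPow F m a))
        (fπσ ((dPow F (m + n) a)⁻¹ * g * dPow F (m + n) a))),
      hξπ', hξσ', Aux3.isWhittaker_mulShift π ψ a hWπ, Aux3.isWhittaker_mulShift σ ψ a hWσ,
      Aux3.induced_transport rfl σ π ψ a hωσ hωπ ξσ ξπ fσπ hIσπ,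
      Aux3.induced_transport (add_comm n m) π σ ψ a hωπ hωσ ξπ ξσ fπσ hIπσ,
      fun g => Aux3.Uop_transport σ π ψ a ωσ ωπ ξσ ξπ fσπ fπσ hIσπ γ hU g⟩
  exact Aux3.gamma_unique (ψ.mulShift (a : F)) π σ
    (Aux3.whittakerType_mulShift π ψ a hπ) (Aux3.whittakerType_mulShift σ ψ a hσ) hγa hconstr

end Statements
end GammaFF
end
end

section
/- Let π and σ be representations of Whittaker type of GL_n(F) and GL_m(F), respectively. Let π̂ denote the representation of GL_n(F) on the space of π given by π̂(g) = π(ᵗg⁻¹) (isomorphic to the contragredient of π), and likewise σ̂. Then Γ(π × σ, ψ) = Γ(σ̂ × π̂, ψ⁻¹). -/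
/-!
Common setup: representations of `GL_n` over a finite field `F`, Whittaker vectors,
parabolic induction, the intertwining operator and the Shahidi gamma factor,
Bessel functions, and various auxiliary matrices.
-/

open Matrix
open scoped TensorProduct Classical

noncomputable section

namespace GammaFF

open Matrix
open scoped TensorProduct Classical

section Statements

variable (F : Type) [Field F] [Fintype F] [DecidableEq F]

/-! ### Auxiliary lemmas -/

set_option linter.unusedSectionVars false

section Aux

variable {G : Type} [Group G]

/-! #### Permutation matrices -/

lemma permGL_coe {k : ℕ} (e : Equiv.Perm (Fin k)) :
    ((permGL F e : GL (Fin k) F) : Matrix (Fin k) (Fin k) F) = e.toPEquiv.toMatrix := rfl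

lemma permGL_mul {k : ℕ} (e f : Equiv.Perm (Fin k)) :
    permGL F e * permGL F f = permGL F (e.trans f) := by
  apply Units.ext
  show (e.toPEquiv.toMatrix : Matrix (Fin k) (Fin k) F) * f.toPEquiv.toMatrix = _
  rw [← PEquiv.toMatrix_trans, ← Equiv.toPEquiv_trans]; rfl

lemma permGL_one {k : ℕ} : permGL F (Equiv.refl (Fin k)) = 1 := by
  apply Units.ext
  show ((Equiv.refl (Fin k)).toPEquiv.toMatrix : Matrix (Fin k) (Fin k) F) = 1
  rw [Equiv.toPEquiv_refl, PEquiv.toMatrix_refl]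

lemma permGL_inv {k : ℕ} (e : Equiv.Perm (Fin k)) :
    (permGL F e)⁻¹ = permGL F e.symm := rfl

lemma glTransposeInv_permGL {k : ℕ} (e : Equiv.Perm (Fin k)) :
    glTransposeInv F (permGL F e) = permGL F e := by
  apply Units.ext
  show ((e.symm.toPEquiv.toMatrix : Matrix (Fin k) (Fin k) F))ᵀ = e.toPEquiv.toMatrix
  rw [Equiv.toPEquiv_symm, PEquiv.toMatrix_symm, Matrix.transpose_transpose]

/-- The reversal element `w_k ∈ GL_k(F)`. -/
def revGL (k : ℕ) : GL (Fin k) F := permGL F (Fin.revPerm)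

lemma revGL_mul_self {k : ℕ} : (revGL F k) * (revGL F k) = 1 := by
  rw [revGL, permGL_mul]
  have : (Fin.revPerm : Equiv.Perm (Fin k)).trans Fin.revPerm = Equiv.refl _ := by
    ext i; simp
  rw [this, permGL_one]

lemma revGL_inv {k : ℕ} : (revGL F k)⁻¹ = revGL F k := by
  rw [revGL, permGL_inv, Fin.revPerm_symm]

lemma glTransposeInv_revGL {k : ℕ} : glTransposeInv F (revGL F k) = revGL F k :=
  glTransposeInv_permGL F _

lemma revGL_coe_mul {k : ℕ} {ι : Type} (M : Matrix (Fin k) ι F) :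
    ((revGL F k : GL (Fin k) F) : Matrix (Fin k) (Fin k) F) * M = M.submatrix Fin.rev id := by
  rw [revGL, permGL_coe, PEquiv.toMatrix_toPEquiv_mul]
  rfl

lemma mul_revGL_coe {k : ℕ} {ι : Type} [Fintype ι] (M : Matrix ι (Fin k) F) :
    M * ((revGL F k : GL (Fin k) F) : Matrix (Fin k) (Fin k) F) = M.submatrix id Fin.rev := by
  rw [revGL, permGL_coe, PEquiv.mul_toMatrix_toPEquiv, Fin.revPerm_symm]
  rfl


/-! #### Block matrices -/

lemma rev_conj {k : ℕ} (M : Matrix (Fin k) (Fin k) F) :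
    ((revGL F k : GL (Fin k) F) : Matrix (Fin k) (Fin k) F) * M *
      ((revGL F k : GL (Fin k) F) : Matrix (Fin k) (Fin k) F) =
      M.submatrix Fin.rev Fin.rev := by
  rw [revGL_coe_mul, mul_revGL_coe, Matrix.submatrix_submatrix]
  rfl

lemma blockEquiv_val {a b k : ℕ} (h : a + b = k) (s : Fin a ⊕ Fin b) :
    ((blockEquiv h s : Fin k) : ℕ) = Sum.elim (fun x : Fin a => (x : ℕ))
      (fun y : Fin b => a + (y : ℕ)) s := by
  cases s <;> simp [blockEquiv]

lemma blockEquiv_rev {a b k : ℕ} (h : a + b = k) (h' : b + a = k) (s : Fin b ⊕ Fin a) :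
    Fin.rev (blockEquiv h' s) = blockEquiv h (Sum.swap (Sum.map Fin.rev Fin.rev s)) := by
  apply Fin.ext
  rcases s with x | y
  · have h1 := blockEquiv_val h' (Sum.inl x)
    have h2 := blockEquiv_val h (Sum.inr (Fin.rev x))
    have h3 : ((Fin.rev x : Fin b) : ℕ) = b - (x + 1) := Fin.val_rev x
    have h4 : (x : ℕ) < b := x.isLt
    simp only [Sum.elim_inl, Sum.elim_inr] at h1 h2
    simp only [Sum.swap_inl, Sum.map_inl]
    rw [Fin.val_rev, h1, h2, h3]
    omega
  · have h1 := blockEquiv_val h' (Sum.inr y)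
    have h2 := blockEquiv_val h (Sum.inl (Fin.rev y))
    have h3 : ((Fin.rev y : Fin a) : ℕ) = a - (y + 1) := Fin.val_rev y
    have h4 : (y : ℕ) < a := y.isLt
    simp only [Sum.elim_inl, Sum.elim_inr] at h1 h2
    simp only [Sum.swap_inr, Sum.map_inr]
    rw [Fin.val_rev, h1, h2, h3]
    omega

lemma blockEquiv_symm_rev {a b k : ℕ} (h : a + b = k) (h' : b + a = k) (i : Fin k) :
    (blockEquiv h).symm (Fin.rev i) =
      Sum.swap (Sum.map Fin.rev Fin.rev ((blockEquiv h').symm i)) := by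
  rw [Equiv.symm_apply_eq, ← blockEquiv_rev h h', Equiv.apply_symm_apply]

lemma rev_conj_bmat {a b k : ℕ} (h : a + b = k) (h' : b + a = k)
    (X : Matrix (Fin a) (Fin a) F) (B : Matrix (Fin a) (Fin b) F)
    (C : Matrix (Fin b) (Fin a) F) (Y : Matrix (Fin b) (Fin b) F) :
    ((revGL F k : GL (Fin k) F) : Matrix (Fin k) (Fin k) F) * bmat F h X B C Y *
      ((revGL F k : GL (Fin k) F) : Matrix (Fin k) (Fin k) F) =
      bmat F h' (Y.submatrix Fin.rev Fin.rev) (C.submatrix Fin.rev Fin.rev)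
        (B.submatrix Fin.rev Fin.rev) (X.submatrix Fin.rev Fin.rev) := by
  rw [rev_conj]
  ext i j
  simp only [bmat, Matrix.submatrix_apply, blockEquiv_symm_rev h h']
  rcases hsi : (blockEquiv h').symm i with x | y <;>
    rcases hsj : (blockEquiv h').symm j with x' | y' <;>
    simp [Matrix.fromBlocks]

lemma bmat_transpose {a b k : ℕ} (h : a + b = k) (X : Matrix (Fin a) (Fin a) F)
    (B : Matrix (Fin a) (Fin b) F) (C : Matrix (Fin b) (Fin a) F)
    (Y : Matrix (Fin b) (Fin b) F) :
    (bmat F h X B C Y)ᵀ = bmat F h Xᵀ Cᵀ Bᵀ Yᵀ := by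
  unfold bmat
  rw [Matrix.transpose_submatrix, Matrix.fromBlocks_transpose]

lemma pElt_coe {a b k : ℕ} (h : a + b = k) (A : GL (Fin a) F) (B : Matrix (Fin a) (Fin b) F)
    (D : GL (Fin b) F) :
    ((pElt F h A B D : GL (Fin k) F) : Matrix (Fin k) (Fin k) F) =
      bmat F h (A : Matrix (Fin a) (Fin a) F) B 0 (D : Matrix (Fin b) (Fin b) F) := rfl

lemma pElt_mul {a b k : ℕ} (h : a + b = k) (A A' : GL (Fin a) F)
    (B B' : Matrix (Fin a) (Fin b) F) (D D' : GL (Fin b) F) :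
    pElt F h A B D * pElt F h A' B' D' =
      pElt F h (A * A') ((A : Matrix (Fin a) (Fin a) F) * B' + B * (D' : Matrix (Fin b) (Fin b) F))
        (D * D') := by
  apply Units.ext
  show (pElt F h A B D : Matrix (Fin k) (Fin k) F) * (pElt F h A' B' D' : Matrix (Fin k) (Fin k) F) = _
  rw [pElt_coe, pElt_coe, bmat_mul, pElt_coe]
  congr 1 <;> simp [Units.val_mul]

lemma pElt_one {a b k : ℕ} (h : a + b = k) :
    pElt F h (1 : GL (Fin a) F) 0 (1 : GL (Fin b) F) = 1 := by
  apply Units.ext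
  show (pElt F h 1 0 1 : Matrix (Fin k) (Fin k) F) = 1
  rw [pElt_coe, Units.val_one, Units.val_one, bmat_one]

lemma pElt_inv {a b k : ℕ} (h : a + b = k) (A : GL (Fin a) F) (B : Matrix (Fin a) (Fin b) F)
    (D : GL (Fin b) F) :
    (pElt F h A B D)⁻¹ =
      pElt F h A⁻¹ (-(((A⁻¹ : GL (Fin a) F) : Matrix (Fin a) (Fin a) F) * B *
        ((D⁻¹ : GL (Fin b) F) : Matrix (Fin b) (Fin b) F))) D⁻¹ := Units.ext rfl


/-! #### Unipotent matrices and `supDiag` -/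

lemma IsUnip_one {k : ℕ} : IsUnip F (1 : GL (Fin k) F) := by
  constructor
  · intro i; simp
  · intro i j hij
    have hne : i ≠ j := fun h => by subst h; omega
    show (1 : Matrix (Fin k) (Fin k) F) i j = 0
    exact Matrix.one_apply_ne hne

lemma IsUnip_mul {k : ℕ} {u v : GL (Fin k) F} (hu : IsUnip F u) (hv : IsUnip F v) :
    IsUnip F (u * v) := by
  obtain ⟨hu1, hu2⟩ := hu
  obtain ⟨hv1, hv2⟩ := hv
  constructor
  · intro i
    show ((u : Matrix (Fin k) (Fin k) F) * (v : Matrix (Fin k) (Fin k) F)) i i = 1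
    rw [Matrix.mul_apply, Finset.sum_eq_single i]
    · rw [hu1 i, hv1 i, one_mul]
    · intro l _ hl
      rcases Nat.lt_or_ge (l : ℕ) (i : ℕ) with hlt | hge
      · rw [hu2 i l hlt, zero_mul]
      · have hgt : (i : ℕ) < (l : ℕ) :=
          lt_of_le_of_ne hge (fun hh => hl (Fin.ext hh.symm))
        rw [hv2 l i hgt, mul_zero]
    · intro hh; exact absurd (Finset.mem_univ i) hh
  · intro i j hij
    show ((u : Matrix (Fin k) (Fin k) F) * (v : Matrix (Fin k) (Fin k) F)) i j = 0
    rw [Matrix.mul_apply]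
    apply Finset.sum_eq_zero
    intro l _
    rcases lt_or_ge ((l : ℕ)) ((i : ℕ)) with hlt | hle
    · rw [hu2 i l hlt, zero_mul]
    · rw [hv2 l j (lt_of_lt_of_le hij hle), mul_zero]

lemma IsUnip_pow {k : ℕ} {u : GL (Fin k) F} (hu : IsUnip F u) (t : ℕ) :
    IsUnip F (u ^ t) := by
  induction t with
  | zero => simpa using IsUnip_one F
  | succ t ih => rw [pow_succ]; exact IsUnip_mul F ih hu

lemma IsUnip_inv {k : ℕ} {u : GL (Fin k) F} (hu : IsUnip F u) : IsUnip F u⁻¹ := by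
  have hpos : 0 < orderOf u := orderOf_pos u
  have : u⁻¹ = u ^ (orderOf u - 1) := by
    symm
    apply eq_inv_of_mul_eq_one_left
    rw [← pow_succ, Nat.sub_add_cancel hpos]
    exact pow_orderOf_eq_one u
  rw [this]
  exact IsUnip_pow F hu _

lemma supDiag_inv_unip {k : ℕ} {u : GL (Fin k) F} (hu : IsUnip F u) :
    supDiag F ((u⁻¹ : GL (Fin k) F) : Matrix (Fin k) (Fin k) F) =
      - supDiag F ((u : GL (Fin k) F) : Matrix (Fin k) (Fin k) F) := by
  obtain ⟨hu1, hu2⟩ := hu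
  obtain ⟨hi1, hi2⟩ := IsUnip_inv F ⟨hu1, hu2⟩
  have key : ∀ i j : Fin k, (j : ℕ) = (i : ℕ) + 1 →
      ((u⁻¹ : GL (Fin k) F) : Matrix (Fin k) (Fin k) F) i j
        = - ((u : GL (Fin k) F) : Matrix (Fin k) (Fin k) F) i j := by
    intro i j hc
    have hne : i ≠ j := fun hh => by rw [hh] at hc; omega
    have h0 : (((u : GL (Fin k) F) : Matrix (Fin k) (Fin k) F) *
        ((u⁻¹ : GL (Fin k) F) : Matrix (Fin k) (Fin k) F)) i j = 0 := by
      rw [u.mul_inv]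
      exact Matrix.one_apply_ne hne
    rw [Matrix.mul_apply] at h0
    have hsum : ∑ l ∈ ({i, j} : Finset (Fin k)),
        ((u : GL (Fin k) F) : Matrix (Fin k) (Fin k) F) i l *
          ((u⁻¹ : GL (Fin k) F) : Matrix (Fin k) (Fin k) F) l j = 0 := by
      rw [Finset.sum_subset (Finset.subset_univ _)]
      · exact h0
      · intro l _ hl
        simp only [Finset.mem_insert, Finset.mem_singleton, not_or] at hl
        rcases Nat.lt_or_ge (l : ℕ) (i : ℕ) with hlt | hge
        · rw [hu2 i l hlt, zero_mul]
        · have hgt : (j : ℕ) < (l : ℕ) := by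
            have h1 : (l : ℕ) ≠ (i : ℕ) := fun hh => hl.1 (Fin.ext hh)
            have h2 : (l : ℕ) ≠ (j : ℕ) := fun hh => hl.2 (Fin.ext hh)
            omega
          rw [hi2 l j hgt, mul_zero]
    rw [Finset.sum_pair hne, hu1 i, one_mul, hi1 j, mul_one] at hsum
    exact eq_neg_of_add_eq_zero_left hsum
  unfold supDiag
  rw [← Finset.sum_neg_distrib]
  apply Finset.sum_congr rfl
  intro i _
  rw [← Finset.sum_neg_distrib]
  apply Finset.sum_congr rfl
  intro j _
  by_cases hc : (j : ℕ) = (i : ℕ) + 1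
  · rw [if_pos hc, if_pos hc, key i j hc]
  · rw [if_neg hc, if_neg hc, neg_zero]


lemma supDiag_submatrix_rev {k : ℕ} (M : Matrix (Fin k) (Fin k) F) :
    supDiag F (M.submatrix Fin.rev Fin.rev) = supDiag F Mᵀ := by
  unfold supDiag
  have hcond : ∀ i j : Fin k,
      ((((Fin.rev j : Fin k)) : ℕ) = (((Fin.rev i : Fin k)) : ℕ) + 1) ↔ ((i : ℕ) = (j : ℕ) + 1) := by
    intro i j
    have hri : ((Fin.rev i : Fin k) : ℕ) = k - (i + 1) := Fin.val_rev i
    have hrj : ((Fin.rev j : Fin k) : ℕ) = k - (j + 1) := Fin.val_rev j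
    have := i.isLt
    have := j.isLt
    omega
  have T : (∑ i : Fin k, ∑ j : Fin k,
        if (j : ℕ) = (i : ℕ) + 1 then M.submatrix Fin.rev Fin.rev i j else 0)
      = ∑ a : Fin k, ∑ b : Fin k, if (a : ℕ) = (b : ℕ) + 1 then M a b else 0 := by
    refine Fintype.sum_equiv Fin.revPerm _ _ (fun a => ?_)
    refine Fintype.sum_equiv Fin.revPerm _ _ (fun b => ?_)
    simp only [Fin.revPerm_apply, Matrix.submatrix_apply, Fin.rev_rev]
    by_cases hc : (b : ℕ) = (a : ℕ) + 1
    · rw [if_pos hc, if_pos ((hcond b a).mpr hc)]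
    · rw [if_neg hc, if_neg (fun hh => hc ((hcond b a).mp hh))]
  rw [T, Finset.sum_comm]
  apply Finset.sum_congr rfl
  intro i _
  apply Finset.sum_congr rfl
  intro j _
  rw [Matrix.transpose_apply]

/-! #### The twisting involution `g ↦ w ᵗg⁻¹ w` -/

/-- The involution `g ↦ w_k ᵗg⁻¹ w_k` of `GL_k(F)`. -/
def twHat {k : ℕ} (g : GL (Fin k) F) : GL (Fin k) F :=
  revGL F k * glTransposeInv F g * revGL F k

lemma twHat_mul {k : ℕ} (g h : GL (Fin k) F) :
    twHat F (g * h) = twHat F g * twHat F h := by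
  unfold twHat
  rw [_root_.map_mul (glTransposeInv F)]
  simp only [mul_assoc]
  congr 1
  congr 1
  rw [← mul_assoc, revGL_mul_self, one_mul]

lemma twHat_coe {k : ℕ} (g : GL (Fin k) F) :
    ((twHat F g : GL (Fin k) F) : Matrix (Fin k) (Fin k) F) =
      (((g⁻¹ : GL (Fin k) F) : Matrix (Fin k) (Fin k) F))ᵀ.submatrix Fin.rev Fin.rev := by
  show ((revGL F k : GL (Fin k) F) : Matrix (Fin k) (Fin k) F) * _ * _ = _
  rw [← rev_conj]
  rfl

lemma IsUnip_twHat {k : ℕ} {u : GL (Fin k) F} (hu : IsUnip F u) :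
    IsUnip F (twHat F u) := by
  obtain ⟨hi1, hi2⟩ := IsUnip_inv F hu
  constructor
  · intro i
    rw [twHat_coe]
    exact hi1 _
  · intro i j hij
    rw [twHat_coe]
    simp only [Matrix.submatrix_apply, Matrix.transpose_apply]
    apply hi2
    have hri : ((Fin.rev i : Fin k) : ℕ) = k - (i + 1) := Fin.val_rev i
    have hrj : ((Fin.rev j : Fin k) : ℕ) = k - (j + 1) := Fin.val_rev j
    have := i.isLt
    have := j.isLt
    omega

lemma psiU_twHat {k : ℕ} (ψ : AddChar F ℂ) {u : GL (Fin k) F} (hu : IsUnip F u) :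
    psiU ψ (twHat F u) = psiU ψ⁻¹ u := by
  unfold psiU
  rw [twHat_coe, supDiag_submatrix_rev]
  have : (((u⁻¹ : GL (Fin k) F) : Matrix (Fin k) (Fin k) F))ᵀᵀ
      = ((u⁻¹ : GL (Fin k) F) : Matrix (Fin k) (Fin k) F) := Matrix.transpose_transpose _
  rw [this, supDiag_inv_unip F hu, AddChar.map_neg_eq_inv, AddChar.inv_apply']


lemma glTransposeInv_glTransposeInv {k : ℕ} (g : GL (Fin k) F) :
    glTransposeInv F (glTransposeInv F g) = g := by
  apply Units.ext
  show ((((glTransposeInv F g)⁻¹ : GL (Fin k) F) : Matrix (Fin k) (Fin k) F))ᵀ = _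
  have : ((glTransposeInv F g)⁻¹ : GL (Fin k) F) =
      ⟨((g : GL (Fin k) F) : Matrix (Fin k) (Fin k) F)ᵀ,
       (((g⁻¹ : GL (Fin k) F) : Matrix (Fin k) (Fin k) F))ᵀ,
       by rw [← Matrix.transpose_mul, Units.inv_mul, Matrix.transpose_one],
       by rw [← Matrix.transpose_mul, Units.mul_inv, Matrix.transpose_one]⟩ := rfl
  rw [this]
  exact Matrix.transpose_transpose _

lemma twHat_twHat {k : ℕ} (g : GL (Fin k) F) : twHat F (twHat F g) = g := by
  have hr : ∀ x : GL (Fin k) F, revGL F k * (revGL F k * x) = x := fun x => by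
    rw [← mul_assoc, revGL_mul_self, one_mul]
  unfold twHat
  rw [_root_.map_mul (glTransposeInv F), _root_.map_mul (glTransposeInv F),
    glTransposeInv_revGL, glTransposeInv_glTransposeInv]
  simp only [mul_assoc]
  rw [hr, revGL_mul_self, mul_one]

lemma twHat_permGL {k : ℕ} (e : Equiv.Perm (Fin k)) :
    twHat F (permGL F e) = permGL F ((Fin.revPerm.trans e).trans Fin.revPerm) := by
  unfold twHat
  rw [glTransposeInv_permGL, revGL, permGL_mul, permGL_mul]

lemma twHat_pElt {a b k : ℕ} (h : a + b = k) (h' : b + a = k) (A : GL (Fin a) F)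
    (B : Matrix (Fin a) (Fin b) F) (D : GL (Fin b) F) :
    twHat F (pElt F h A B D) =
      pElt F h' (twHat F D)
        (((-(((A⁻¹ : GL (Fin a) F) : Matrix (Fin a) (Fin a) F) * B *
          ((D⁻¹ : GL (Fin b) F) : Matrix (Fin b) (Fin b) F)))ᵀ).submatrix Fin.rev Fin.rev)
        (twHat F A) := by
  apply Units.ext
  show ((revGL F k : GL (Fin k) F) : Matrix (Fin k) (Fin k) F) *
      ((glTransposeInv F (pElt F h A B D) : GL (Fin k) F) : Matrix (Fin k) (Fin k) F) *
      ((revGL F k : GL (Fin k) F) : Matrix (Fin k) (Fin k) F) = _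
  have hval : ((glTransposeInv F (pElt F h A B D) : GL (Fin k) F) : Matrix (Fin k) (Fin k) F)
      = (bmat F h (((A⁻¹ : GL (Fin a) F) : Matrix (Fin a) (Fin a) F))
          (-(((A⁻¹ : GL (Fin a) F) : Matrix (Fin a) (Fin a) F) * B *
            ((D⁻¹ : GL (Fin b) F) : Matrix (Fin b) (Fin b) F))) 0
          (((D⁻¹ : GL (Fin b) F) : Matrix (Fin b) (Fin b) F)))ᵀ := rfl
  have hz : ((0 : Matrix (Fin b) (Fin a) F))ᵀ.submatrix Fin.rev Fin.rev
      = (0 : Matrix (Fin a) (Fin b) F) := by ext i j; simp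
  rw [hval, bmat_transpose, rev_conj_bmat F h h', pElt_coe, ← twHat_coe F D, ← twHat_coe F A, hz]

/-! #### `glCongr` transport -/

lemma glCongr_rfl {k : ℕ} (g : GL (Fin k) F) : glCongr F rfl g = g := by
  apply Units.ext
  ext i j
  rfl

lemma glCongr_glCongr {k k' k'' : ℕ} (c : k = k') (c' : k' = k'') (g : GL (Fin k) F) :
    glCongr F c' (glCongr F c g) = glCongr F (c.trans c') g := by
  subst c; subst c'
  simp only [glCongr_rfl]

lemma glCongr_mul {k k' : ℕ} (c : k = k') (g h : GL (Fin k) F) :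
    glCongr F c (g * h) = glCongr F c g * glCongr F c h := _root_.map_mul _ _ _

lemma glCongr_pElt {a b k k' : ℕ} (h : a + b = k) (c : k = k') (A : GL (Fin a) F)
    (B : Matrix (Fin a) (Fin b) F) (D : GL (Fin b) F) :
    glCongr F c (pElt F h A B D) = pElt F (h.trans c) A B D := by
  subst c
  rw [glCongr_rfl]

lemma glCongr_wSwap {a b k k' : ℕ} (h : a + b = k) (c : k = k') :
    glCongr F c (wSwap F a b k h) = wSwap F a b k' (h.trans c) := by
  subst c
  rw [glCongr_rfl]

lemma IsUnip_glCongr {k k' : ℕ} (c : k = k') {g : GL (Fin k) F} (hg : IsUnip F g) :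
    IsUnip F (glCongr F c g) := by
  subst c
  rwa [glCongr_rfl]

lemma psiU_glCongr {k k' : ℕ} (c : k = k') (ψ' : AddChar F ℂ) (g : GL (Fin k) F) :
    psiU ψ' (glCongr F c g) = psiU ψ' g := by
  subst c
  rw [glCongr_rfl]


/-! #### `wSwap` and permutation identities -/

lemma permGL_val_apply {k : ℕ} (e : Equiv.Perm (Fin k)) (i j : Fin k) :
    ((permGL F e : GL (Fin k) F) : Matrix (Fin k) (Fin k) F) i j
      = if e i = j then 1 else 0 := by
  rw [permGL_coe, PEquiv.toMatrix_apply, Equiv.toPEquiv_apply]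
  simp [eq_comm]

lemma twHat_one {k : ℕ} : twHat F (1 : GL (Fin k) F) = 1 := by
  unfold twHat
  rw [_root_.map_one (glTransposeInv F), mul_one, revGL_mul_self]

lemma twHat_revGL {k : ℕ} : twHat F (revGL F k) = revGL F k := by
  unfold twHat
  rw [glTransposeInv_revGL, revGL_mul_self, one_mul]

lemma twHat_wSwap {a b k : ℕ} (h : a + b = k) (h2 : b + a = k) :
    twHat F (wSwap F a b k h) = wSwap F b a k h2 := by
  rw [wSwap, twHat_permGL, wSwap]
  congr 1
  ext i
  simp only [Equiv.trans_apply, Fin.revPerm_apply, Equiv.sumComm_apply]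
  rw [blockEquiv_symm_rev h h2 i, Sum.swap_swap]
  rw [blockEquiv_rev h ((add_comm b a).trans h)]
  congr 1
  rcases (blockEquiv h2).symm i with x | y <;> simp

lemma wSwap_mul_wSwap {a b k : ℕ} (h : a + b = k) (h2 : b + a = k) :
    wSwap F a b k h * wSwap F b a k h2 = 1 := by
  rw [wSwap, wSwap, permGL_mul, ← permGL_one F]
  congr 1
  ext i
  simp [Equiv.trans_apply]

lemma glTransposeInv_wSwap {a b k : ℕ} (h : a + b = k) :
    glTransposeInv F (wSwap F a b k h) = wSwap F a b k h := glTransposeInv_permGL F _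

lemma pElt_permGL {a b k : ℕ} (h : a + b = k) (ea : Equiv.Perm (Fin a))
    (eb : Equiv.Perm (Fin b)) :
    pElt F h (permGL F ea) 0 (permGL F eb) =
      permGL F ((blockEquiv h).symm.trans ((ea.sumCongr eb).trans (blockEquiv h))) := by
  apply Units.ext
  ext i j
  rw [pElt_coe, permGL_val_apply]
  simp only [Equiv.trans_apply]
  have hj : j = blockEquiv h ((blockEquiv h).symm j) := (Equiv.apply_symm_apply _ _).symm
  have hiff : ((blockEquiv h) ((ea.sumCongr eb) ((blockEquiv h).symm i)) = j)
      ↔ ((ea.sumCongr eb) ((blockEquiv h).symm i) = (blockEquiv h).symm j) :=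
    Equiv.apply_eq_iff_eq_symm_apply _
  simp only [hiff]
  unfold bmat
  rw [Matrix.submatrix_apply]
  rcases hsi : (blockEquiv h).symm i with x | y <;>
    rcases hsj : (blockEquiv h).symm j with x' | y' <;>
    simp [Matrix.fromBlocks, permGL_val_apply]

/-- The block-diagonal reversal element, as a `pElt`. -/
def dwP {a b k : ℕ} (h : a + b = k) : GL (Fin k) F :=
  pElt F h (revGL F a) 0 (revGL F b)

lemma dwP_eq_permGL {a b k : ℕ} (h : a + b = k) :
    dwP F h = permGL F ((blockEquiv h).symm.trans
      ((Equiv.sumCongr (Fin.revPerm) (Fin.revPerm)).trans (blockEquiv h))) :=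
  pElt_permGL F h _ _

lemma dwP_mul_wSwap {a b k : ℕ} (h : a + b = k) (h2 : b + a = k) :
    dwP F h * wSwap F a b k h = wSwap F a b k h * dwP F h2 := by
  rw [dwP_eq_permGL, dwP_eq_permGL, wSwap, permGL_mul, permGL_mul]
  congr 1
  ext i
  simp only [Equiv.trans_apply, Equiv.symm_apply_apply, Equiv.sumCongr_apply,
    Equiv.sumComm_apply]
  congr 1
  rcases (blockEquiv h).symm i with x | y <;> simp

lemma dwP_mul_dwP {a b k : ℕ} (h : a + b = k) : dwP F h * dwP F h = 1 := by
  unfold dwP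
  rw [pElt_mul, revGL_mul_self, revGL_mul_self]
  have hz : ((revGL F a : GL (Fin a) F) : Matrix (Fin a) (Fin a) F) *
        (0 : Matrix (Fin a) (Fin b) F) +
      (0 : Matrix (Fin a) (Fin b) F) * ((revGL F b : GL (Fin b) F) : Matrix (Fin b) (Fin b) F)
      = 0 := by simp
  rw [hz]
  exact pElt_one F h

lemma twHat_dwP {a b k : ℕ} (h : a + b = k) (h2 : b + a = k) :
    twHat F (dwP F h) = dwP F h2 := by
  unfold dwP
  rw [twHat_pElt F h h2, twHat_revGL, twHat_revGL]
  congr 1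
  simp

lemma twHat_pElt_unip {a b k : ℕ} (h : a + b = k) (h2 : b + a = k)
    (X : Matrix (Fin a) (Fin b) F) :
    twHat F (pElt F h 1 X 1) = pElt F h2 1 (-(Xᵀ.submatrix Fin.rev Fin.rev)) 1 := by
  rw [twHat_pElt F h h2, twHat_one, twHat_one]
  congr 1
  ext i j
  simp


/-! #### Tensor product lemmas -/

variable {V W : Type} [AddCommGroup V] [Module ℂ V] [AddCommGroup W] [Module ℂ W]

lemma comm_comm_apply (x : W ⊗[ℂ] V) :
    (TensorProduct.comm ℂ V W) ((TensorProduct.comm ℂ W V) x) = x := by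
  have : (TensorProduct.comm ℂ V W).toLinearMap.comp
      (TensorProduct.comm ℂ W V).toLinearMap = LinearMap.id := by
    apply TensorProduct.ext'
    intro w v
    simp
  calc (TensorProduct.comm ℂ V W) ((TensorProduct.comm ℂ W V) x)
      = ((TensorProduct.comm ℂ V W).toLinearMap.comp
          (TensorProduct.comm ℂ W V).toLinearMap) x := rfl
    _ = x := by rw [this]; rfl

lemma comm_map_apply (f : W →ₗ[ℂ] W) (g : V →ₗ[ℂ] V) (x : W ⊗[ℂ] V) :
    (TensorProduct.comm ℂ W V) (TensorProduct.map f g x) =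
      TensorProduct.map g f ((TensorProduct.comm ℂ W V) x) := by
  have : (TensorProduct.comm ℂ W V).toLinearMap.comp (TensorProduct.map f g) =
      (TensorProduct.map g f).comp (TensorProduct.comm ℂ W V).toLinearMap := by
    apply TensorProduct.ext'
    intro w v
    simp
  exact congrFun (congrArg (fun φ => φ.toFun) this) x

lemma map_map_apply (f f' : W →ₗ[ℂ] W) (g g' : V →ₗ[ℂ] V) (x : W ⊗[ℂ] V) :
    TensorProduct.map f g (TensorProduct.map f' g' x) =
      TensorProduct.map (f ∘ₗ f') (g ∘ₗ g') x := by
  rw [TensorProduct.map_comp]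
  rfl

lemma tmul_ne_zero [FiniteDimensional ℂ V] [FiniteDimensional ℂ W]
    {w : W} {v : V} (hw : w ≠ 0) (hv : v ≠ 0) : w ⊗ₜ[ℂ] v ≠ (0 : W ⊗[ℂ] V) := by
  obtain ⟨φ, hφ⟩ : ∃ φ : Module.Dual ℂ W, φ w ≠ 0 := by
    by_contra hc
    push_neg at hc
    exact hw ((Module.forall_dual_apply_eq_zero_iff ℂ w).mp hc)
  obtain ⟨χ, hχ⟩ : ∃ χ : Module.Dual ℂ V, χ v ≠ 0 := by
    by_contra hc
    push_neg at hc
    exact hv ((Module.forall_dual_apply_eq_zero_iff ℂ v).mp hc)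
  intro hz
  have := congrArg (TensorProduct.dualDistrib ℂ W V (φ ⊗ₜ[ℂ] χ)) hz
  rw [TensorProduct.dualDistrib_apply, map_zero] at this
  exact mul_ne_zero hφ hχ this

/-! #### Transfer of Whittaker vectors to `π̂` -/

lemma isWhittakerVector_hat {m : ℕ} (σ : Representation ℂ (GL (Fin m) F) W)
    (ψ' : AddChar F ℂ) {v : W} (hv : IsWhittakerVector σ ψ' v) :
    IsWhittakerVector (σ.comp (glTransposeInv F)) ψ'⁻¹ (σ (revGL F m) v) := by
  intro u hu
  show σ (glTransposeInv F u) (σ (revGL F m) v) = _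
  have h1 : glTransposeInv F u * revGL F m = revGL F m * twHat F u := by
    unfold twHat
    rw [← mul_assoc, ← mul_assoc, revGL_mul_self, one_mul]
  calc σ (glTransposeInv F u) (σ (revGL F m) v)
      = σ (glTransposeInv F u * revGL F m) v := by rw [_root_.map_mul σ]; rfl
    _ = σ (revGL F m * twHat F u) v := by rw [h1]
    _ = σ (revGL F m) (σ (twHat F u) v) := by rw [_root_.map_mul σ]; rfl
    _ = σ (revGL F m) (psiU ψ' (twHat F u) • v) := by rw [hv _ (IsUnip_twHat F hu)]
    _ = psiU ψ'⁻¹ u • σ (revGL F m) v := by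
        rw [LinearMap.map_smul, psiU_twHat F ψ' hu]

lemma isWhittakerVector_unhat {m : ℕ} (σ : Representation ℂ (GL (Fin m) F) W)
    (ψ' : AddChar F ℂ) {v : W}
    (hv : IsWhittakerVector (σ.comp (glTransposeInv F)) ψ'⁻¹ v) :
    IsWhittakerVector σ ψ' (σ (revGL F m) v) := by
  intro u hu
  have h1 : u * revGL F m = revGL F m * glTransposeInv F (twHat F u) := by
    have hτ : glTransposeInv F (twHat F u) = revGL F m * u * revGL F m := by
      unfold twHat
      rw [_root_.map_mul (glTransposeInv F), _root_.map_mul (glTransposeInv F),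
        glTransposeInv_revGL, glTransposeInv_glTransposeInv]
    rw [hτ, ← mul_assoc, ← mul_assoc, revGL_mul_self, one_mul]
  have h2 : psiU ψ'⁻¹ (twHat F u) = psiU ψ' u := by
    rw [psiU_twHat F ψ'⁻¹ hu]
    unfold psiU
    rw [AddChar.inv_apply', AddChar.inv_apply', inv_inv]
  calc σ u (σ (revGL F m) v)
      = σ (u * revGL F m) v := by rw [_root_.map_mul σ]; rfl
    _ = σ (revGL F m) (σ (glTransposeInv F (twHat F u)) v) := by
        rw [h1, _root_.map_mul σ]; rfl
    _ = σ (revGL F m) (psiU ψ'⁻¹ (twHat F u) • v) :=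
        congrArg (σ (revGL F m)) (hv _ (IsUnip_twHat F hu))
    _ = psiU ψ' u • σ (revGL F m) v := by rw [LinearMap.map_smul, h2]

lemma whittakerType_hat {m : ℕ} (σ : Representation ℂ (GL (Fin m) F) W)
    (ψ' : AddChar F ℂ) (hσ : WhittakerType σ ψ') :
    WhittakerType (σ.comp (glTransposeInv F)) ψ'⁻¹ := by
  obtain ⟨v0, hv0, hw0, hsp⟩ := hσ
  have hinv : ∀ w : W, σ (revGL F m) (σ (revGL F m) w) = w := by
    intro w
    rw [← Module.End.mul_apply, ← _root_.map_mul σ, revGL_mul_self, _root_.map_one σ]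
    rfl
  refine ⟨σ (revGL F m) v0, ?_, isWhittakerVector_hat F σ ψ' hw0, ?_⟩
  · intro hz
    apply hv0
    rw [← hinv v0, hz, map_zero]
  · intro w hw
    obtain ⟨c, hc⟩ := hsp (σ (revGL F m) w) (isWhittakerVector_unhat F σ ψ' hw)
    refine ⟨c, ?_⟩
    rw [← hinv w, hc, LinearMap.map_smul]


/-! #### Determination and uniqueness -/

lemma indSpace_apply {m n k : ℕ} {h : m + n = k} {σ : Representation ℂ (GL (Fin m) F) W}
    {π : Representation ℂ (GL (Fin n) F) V} {f : GL (Fin k) F → W ⊗[ℂ] V}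
    (hf : f ∈ IndSpace h σ π) :
    ∀ (A : GL (Fin m) F) (B : Matrix (Fin m) (Fin n) F) (D : GL (Fin n) F)
      (g : GL (Fin k) F), f (pElt F h A B D * g) = TensorProduct.map (σ A) (π D) (f g) := hf

lemma inducedWhittaker_value {m n k : ℕ} (h : m + n = k)
    {σ : Representation ℂ (GL (Fin m) F) W} {π : Representation ℂ (GL (Fin n) F) V}
    {ψ' : AddChar F ℂ} {ξσ : W} {ξπ : V} {f : GL (Fin k) F → W ⊗[ℂ] V}
    (hf : IsInducedWhittakerVector h σ π ψ' ξσ ξπ f)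
    (A : GL (Fin m) F) (B : Matrix (Fin m) (Fin n) F) (D : GL (Fin n) F)
    (u : GL (Fin k) F) (hu : IsUnip F u) :
    f (pElt F h A B D * wSwap F m n k h * u) =
      psiU ψ' u • TensorProduct.map (σ A) (π D) (ξσ ⊗ₜ[ℂ] ξπ) := by
  obtain ⟨hind, hwh, hval, _⟩ := hf
  rw [mul_assoc, indSpace_apply F hind A B D (wSwap F m n k h * u),
    hwh u hu (wSwap F m n k h), hval, LinearMap.map_smul]

lemma inducedWhittaker_smul {m n k : ℕ} (h : m + n = k)
    {σ : Representation ℂ (GL (Fin m) F) W} {π : Representation ℂ (GL (Fin n) F) V}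
    {ψ' : AddChar F ℂ} {ξσ ξσ' : W} {ξπ ξπ' : V}
    {f f' : GL (Fin k) F → W ⊗[ℂ] V} (c d : ℂ)
    (hσv : ξσ' = d • ξσ) (hπv : ξπ' = c • ξπ)
    (hf : IsInducedWhittakerVector h σ π ψ' ξσ ξπ f)
    (hf' : IsInducedWhittakerVector h σ π ψ' ξσ' ξπ' f') :
    ∀ g, f' g = (d * c) • f g := by
  intro g
  by_cases hdec : ∃ (A : GL (Fin m) F) (B : Matrix (Fin m) (Fin n) F) (D : GL (Fin n) F)
      (u : GL (Fin k) F), IsUnip F u ∧ g = pElt F h A B D * wSwap F m n k h * u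
  · obtain ⟨A, B, D, u, hu, rfl⟩ := hdec
    rw [inducedWhittaker_value F h hf' A B D u hu, inducedWhittaker_value F h hf A B D u hu,
      hσv, hπv]
    have hts : (d • ξσ) ⊗ₜ[ℂ] (c • ξπ) = (d * c) • (ξσ ⊗ₜ[ℂ] ξπ) := by
      rw [TensorProduct.tmul_smul, ← TensorProduct.smul_tmul', smul_smul, mul_comm]
    rw [hts, LinearMap.map_smul, smul_smul, smul_smul]
    congr 1
    ring
  · have h1 : f g = 0 := by
      by_contra hz
      exact hdec (hf.2.2.2 g hz)
    have h2 : f' g = 0 := by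
      by_contra hz
      exact hdec (hf'.2.2.2 g hz)
    rw [h1, h2, smul_zero]

lemma smul_cancel_ne_zero {M : Type} [AddCommGroup M] [Module ℂ M] {a b : ℂ} {x : M}
    (hx : x ≠ 0) (hab : a • x = b • x) : a = b := by
  by_contra hne
  apply hx
  have hsub : (a - b) • x = 0 := by rw [sub_smul, hab, sub_self]
  have h2 : (a - b)⁻¹ • ((a - b) • x) = 0 := by rw [hsub, smul_zero]
  rwa [inv_smul_smul₀ (sub_ne_zero.mpr hne)] at h2

lemma gamma_unique {n m : ℕ} [FiniteDimensional ℂ V] [FiniteDimensional ℂ W]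
    (ψ' : AddChar F ℂ) (π : Representation ℂ (GL (Fin n) F) V)
    (σ : Representation ℂ (GL (Fin m) F) W)
    (hπ : WhittakerType π ψ') (hσ : WhittakerType σ ψ') {γ₁ γ₂ : ℂ}
    (h1 : IsShahidiGamma ψ' π σ γ₁) (h2 : IsShahidiGamma ψ' π σ γ₂) : γ₁ = γ₂ := by
  obtain ⟨ξπ, ξσ, fσπ, fπσ, hξπ, hξσ, hwπ, hwσ, hfσπ, hfπσ, hU⟩ := h1
  obtain ⟨ξπ2, ξσ2, fσπ2, fπσ2, hξπ2, hξσ2, hwπ2, hwσ2, hfσπ2, hfπσ2, hU2⟩ := h2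
  obtain ⟨v0, hv0, _, hsp⟩ := hπ
  obtain ⟨w0, hw0, _, hspσ⟩ := hσ
  obtain ⟨c1, hc1⟩ := hsp ξπ hwπ
  obtain ⟨c2, hc2⟩ := hsp ξπ2 hwπ2
  obtain ⟨d1, hd1⟩ := hspσ ξσ hwσ
  obtain ⟨d2, hd2⟩ := hspσ ξσ2 hwσ2
  have hc1ne : c1 ≠ 0 := fun hz => hξπ (by rw [hc1, hz, zero_smul])
  have hc2ne : c2 ≠ 0 := fun hz => hξπ2 (by rw [hc2, hz, zero_smul])
  have hd1ne : d1 ≠ 0 := fun hz => hξσ (by rw [hd1, hz, zero_smul])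
  have hd2ne : d2 ≠ 0 := fun hz => hξσ2 (by rw [hd2, hz, zero_smul])
  set c : ℂ := c2 * c1⁻¹ with hc
  set d : ℂ := d2 * d1⁻¹ with hd
  have hcne : c ≠ 0 := mul_ne_zero hc2ne (inv_ne_zero hc1ne)
  have hdne : d ≠ 0 := mul_ne_zero hd2ne (inv_ne_zero hd1ne)
  have hξπ2' : ξπ2 = c • ξπ := by
    rw [hc2, hc1, smul_smul, hc]
    congr 1
    field_simp
  have hξσ2' : ξσ2 = d • ξσ := by
    rw [hd2, hd1, smul_smul, hd]
    congr 1
    field_simp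
  have hfσπ2' := inducedWhittaker_smul F rfl c d hξσ2' hξπ2' hfσπ hfσπ2
  have hfπσ2' := inducedWhittaker_smul F (add_comm n m) d c hξπ2' hξσ2' hfπσ hfπσ2
  have hUop2 : ∀ g, Uop rfl fσπ2 g = (d * c) • Uop rfl fσπ g := by
    intro g
    unfold Uop
    rw [Finset.smul_sum]
    apply Finset.sum_congr rfl
    intro X _
    rw [hfσπ2', _root_.map_smul]
  set g0 := wSwap F n m (m + n) (add_comm n m) with hg0
  have key := hU2 g0
  rw [hUop2 g0, hU g0, hfπσ2' g0, hfπσ.2.2.1, smul_smul, smul_smul] at key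
  have hT : ξπ ⊗ₜ[ℂ] ξσ ≠ (0 : V ⊗[ℂ] W) := tmul_ne_zero hξπ hξσ
  have hco := smul_cancel_ne_zero hT key
  have hdcne : d * c ≠ 0 := mul_ne_zero hdne hcne
  have : (d * c) * γ₁ = (d * c) * γ₂ := by rw [hco]; ring
  exact mul_left_cancel₀ hdcne this


/-! #### Helpers for the duality construction -/

lemma revGL_mul_twHat {b : ℕ} (D : GL (Fin b) F) :
    revGL F b * twHat F D = glTransposeInv F D * revGL F b := by
  unfold twHat
  rw [← mul_assoc, ← mul_assoc, revGL_mul_self, one_mul]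

lemma dwP_mul_twHat_pElt {a b k : ℕ} (h1 : a + b = k) (h2 : b + a = k)
    (A : GL (Fin a) F) (B : Matrix (Fin a) (Fin b) F) (D : GL (Fin b) F) :
    ∃ E : Matrix (Fin b) (Fin a) F,
      dwP F h2 * twHat F (pElt F h1 A B D) =
        pElt F h2 (glTransposeInv F D * revGL F b) E (glTransposeInv F A * revGL F a) := by
  refine ⟨((revGL F b : GL (Fin b) F) : Matrix (Fin b) (Fin b) F) *
      (((-(((A⁻¹ : GL (Fin a) F) : Matrix (Fin a) (Fin a) F) * B *
        ((D⁻¹ : GL (Fin b) F) : Matrix (Fin b) (Fin b) F)))ᵀ).submatrix Fin.rev Fin.rev) +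
      (0 : Matrix (Fin b) (Fin a) F) *
        ((twHat F A : GL (Fin a) F) : Matrix (Fin a) (Fin a) F), ?_⟩
  unfold dwP
  rw [twHat_pElt F h1 h2, pElt_mul, revGL_mul_twHat, revGL_mul_twHat]

lemma dwP_mul_pElt_unip {a b k : ℕ} (h : a + b = k) (Y : Matrix (Fin a) (Fin b) F) :
    dwP F h * pElt F h 1 Y 1 =
      pElt F h 1 (Y.submatrix Fin.rev Fin.rev) 1 * dwP F h := by
  unfold dwP
  rw [pElt_mul, pElt_mul]
  congr 1
  · rw [mul_one, one_mul]
  · simp only [Matrix.zero_mul, Matrix.mul_zero, add_zero, zero_add, Units.val_one,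
      Matrix.one_mul]
    rw [revGL_coe_mul, mul_revGL_coe]
    ext i j
    simp [Fin.rev_rev]
  · rw [mul_one, one_mul]

lemma rep_rev_rev {q : ℕ} (τ : Representation ℂ (GL (Fin q) F) W) (w : W) :
    τ (revGL F q) (τ (revGL F q) w) = w := by
  rw [← Module.End.mul_apply, ← _root_.map_mul τ, revGL_mul_self, _root_.map_one τ]
  rfl

lemma rep_rev_ne_zero {q : ℕ} (τ : Representation ℂ (GL (Fin q) F) W) {w : W}
    (hw : w ≠ 0) : τ (revGL F q) w ≠ 0 := fun hz =>
  hw (by rw [← rep_rev_rev F τ w, hz, map_zero])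


lemma hat_induced {p q kk kk' : ℕ} (hρ : p + q = kk) (hc : q + p = kk')
    {P Q : Type} [AddCommGroup P] [Module ℂ P] [AddCommGroup Q] [Module ℂ Q]
    (ρ : Representation ℂ (GL (Fin p) F) P) (τ : Representation ℂ (GL (Fin q) F) Q)
    (ψ' : AddChar F ℂ) (ξρ : P) (ξτ : Q) (f : GL (Fin kk) F → P ⊗[ℂ] Q)
    (hf : IsInducedWhittakerVector hρ ρ τ ψ' ξρ ξτ f) :
    IsInducedWhittakerVector hc (τ.comp (glTransposeInv F)) (ρ.comp (glTransposeInv F)) ψ'⁻¹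
      (τ (revGL F q) ξτ) (ρ (revGL F p) ξρ)
      (fun x => (TensorProduct.comm ℂ P Q)
        (f (dwP F hρ * twHat F (glCongr F (hc.symm.trans ((add_comm q p).trans hρ)) x)))) := by
  set ce : kk' = kk := hc.symm.trans ((add_comm q p).trans hρ) with hce
  set hκ : q + p = kk := (add_comm q p).trans hρ with hhκ
  obtain ⟨hind, hwh, hval, hsupp⟩ := hf
  have hdwP : ∀ x : GL (Fin kk) F,
      f (dwP F hρ * x) = TensorProduct.map (ρ (revGL F p)) (τ (revGL F q)) (f x) := fun x =>
    indSpace_apply F hind (revGL F p) 0 (revGL F q) x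
  refine ⟨?_, ?_, ?_, ?_⟩
  · -- membership in the induced space
    intro A B D g
    simp only
    rw [glCongr_mul, glCongr_pElt F hc ce, twHat_mul, ← mul_assoc]
    obtain ⟨E, hE⟩ := dwP_mul_twHat_pElt F (hc.trans ce) hρ A B D
    rw [hE, indSpace_apply F hind, hdwP]
    rw [_root_.map_mul ρ, _root_.map_mul τ, comm_map_apply, comm_map_apply, map_map_apply]
    rfl
  · -- Whittaker property
    intro u hu g
    simp only
    rw [glCongr_mul, twHat_mul, ← mul_assoc]
    rw [hwh _ (IsUnip_twHat F (IsUnip_glCongr F ce hu)) _]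
    rw [psiU_twHat F ψ' (IsUnip_glCongr F ce hu), psiU_glCongr F ce]
    rw [_root_.map_smul]
  · -- value at the Weyl element
    simp only
    rw [glCongr_wSwap F hc ce, twHat_wSwap F (hc.trans ce) hρ, hdwP, hval]
    rw [TensorProduct.map_tmul]
    rfl
  · -- support
    intro g hg
    simp only at hg
    have hfne : f (dwP F hρ * twHat F (glCongr F ce g)) ≠ 0 := by
      intro hz
      rw [hz, map_zero] at hg
      exact hg rfl
    obtain ⟨A, B, D, u, hu, hdec⟩ := hsupp _ hfne
    have h2 : twHat F (glCongr F ce g) =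
        dwP F hρ * (pElt F hρ A B D * wSwap F p q kk hρ * u) := by
      rw [← hdec, ← mul_assoc, dwP_mul_dwP F hρ, one_mul]
    have h3 : glCongr F ce g =
        twHat F (dwP F hρ * (pElt F hρ A B D * wSwap F p q kk hρ * u)) := by
      rw [← h2, twHat_twHat]
    rw [twHat_mul, twHat_mul, twHat_mul, twHat_dwP F hρ hκ, twHat_pElt F hρ hκ,
      twHat_wSwap F hρ hκ] at h3
    set A2 : GL (Fin q) F := twHat F D with hA2
    set D2 : GL (Fin p) F := twHat F A with hD2
    set E2 : Matrix (Fin q) (Fin p) F :=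
      ((-(((A⁻¹ : GL (Fin p) F) : Matrix (Fin p) (Fin p) F) * B *
        ((D⁻¹ : GL (Fin q) F) : Matrix (Fin q) (Fin q) F)))ᵀ).submatrix Fin.rev Fin.rev with hE2
    -- h3 : glCongr F ce g = dwP F hκ * (pElt F hκ A2 E2 D2 * wSwap F q p kk hκ * twHat F u)
    have h4 : glCongr F ce g = (dwP F hκ * pElt F hκ A2 E2 D2) * wSwap F q p kk hκ
        * twHat F u := by
      rw [h3]
      unfold dwP
      simp only [mul_assoc]
    have h5 : dwP F hκ * pElt F hκ A2 E2 D2 =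
        pElt F hκ (revGL F q * A2)
          (((revGL F q : GL (Fin q) F) : Matrix (Fin q) (Fin q) F) * E2 +
            (0 : Matrix (Fin q) (Fin p) F) * ((D2 : GL (Fin p) F) : Matrix (Fin p) (Fin p) F))
          (revGL F p * D2) := by
      unfold dwP
      rw [pElt_mul]
    rw [h5] at h4
    refine ⟨revGL F q * A2,
      ((revGL F q : GL (Fin q) F) : Matrix (Fin q) (Fin q) F) * E2 +
        (0 : Matrix (Fin q) (Fin p) F) * ((D2 : GL (Fin p) F) : Matrix (Fin p) (Fin p) F),
      revGL F p * D2, glCongr F ce.symm (twHat F u),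
      IsUnip_glCongr F ce.symm (IsUnip_twHat F hu), ?_⟩
    have h6 : g = glCongr F ce.symm (glCongr F ce g) := by
      rw [glCongr_glCongr]
      exact (glCongr_rfl F g).symm
    rw [h6, h4, glCongr_mul, glCongr_mul, glCongr_pElt F hκ ce.symm,
      glCongr_wSwap F hκ ce.symm]


lemma isShahidiGamma_hat {n m : ℕ}
    (ψ : AddChar F ℂ) (π : Representation ℂ (GL (Fin n) F) V)
    (σ : Representation ℂ (GL (Fin m) F) W) {γ : ℂ}
    (h : IsShahidiGamma ψ π σ γ) :
    IsShahidiGamma ψ⁻¹ (σ.comp (glTransposeInv F)) (π.comp (glTransposeInv F)) γ := by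
  obtain ⟨ξπ, ξσ, fσπ, fπσ, hξπ, hξσ, hwπ, hwσ, hfσπ, hfπσ, hU⟩ := h
  have h5 := hat_induced F (rfl : m + n = m + n) (rfl : n + m = n + m) σ π ψ ξσ ξπ fσπ hfσπ
  have h6 := hat_induced F (add_comm n m) (add_comm m n) π σ ψ ξπ ξσ fπσ hfπσ
  refine ⟨σ (revGL F m) ξσ, π (revGL F n) ξπ, _, _,
    rep_rev_ne_zero F σ hξσ, rep_rev_ne_zero F π hξπ,
    isWhittakerVector_hat F σ ψ hwσ, isWhittakerVector_hat F π ψ hwπ,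
    h5, h6, ?_⟩
  intro g
  set x₀ : GL (Fin (m + n)) F :=
    dwP F (add_comm n m) * twHat F (glCongr F (add_comm n m) g) with hx₀
  have hUg := hU x₀
  unfold Uop at hUg ⊢
  have hUg2 := congrArg (⇑(TensorProduct.comm ℂ V W)) hUg
  rw [_root_.map_sum, _root_.map_smul] at hUg2
  simp only [comm_comm_apply] at hUg2
  refine Eq.trans ?_ hUg2
  refine Fintype.sum_equiv
    ⟨fun X : Matrix (Fin m) (Fin n) F => -Xᵀ, fun Z : Matrix (Fin n) (Fin m) F => -Zᵀ,
      fun X => by simp, fun Z => by simp⟩ _ _ (fun X => ?_)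
  simp only [Equiv.coe_fn_mk]
  rw [comm_comm_apply]
  congr 1
  rw [glCongr_mul, glCongr_mul, glCongr_wSwap, glCongr_pElt, twHat_mul, twHat_mul,
    twHat_wSwap F _ (rfl : m + n = m + n), twHat_pElt_unip F _ (add_comm n m)]
  simp only [← mul_assoc]
  rw [dwP_mul_wSwap F rfl (add_comm n m),
    mul_assoc (wSwap F m n (m + n) rfl) (dwP F (add_comm n m)),
    dwP_mul_pElt_unip F (add_comm n m)]
  have hXX : ((-(Xᵀ.submatrix Fin.rev Fin.rev)).submatrix Fin.rev Fin.rev :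
      Matrix (Fin n) (Fin m) F) = -Xᵀ := by
    ext i j
    simp [Fin.rev_rev]
  rw [hXX]
  simp only [mul_assoc]
  rw [hx₀]

end Aux
theorem statement5
    (ψ : AddChar F ℂ) (hψ : ψ ≠ 1)
    {n m : ℕ} (hn : n ≠ 0) (hm : m ≠ 0)
    {V W : Type} [AddCommGroup V] [Module ℂ V] [FiniteDimensional ℂ V]
    [AddCommGroup W] [Module ℂ W] [FiniteDimensional ℂ W]
    (π : Representation ℂ (GL (Fin n) F) V) (σ : Representation ℂ (GL (Fin m) F) W)
    (hπ : WhittakerType π ψ) (hσ : WhittakerType σ ψ) :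
    ∀ γ γ' : ℂ,
      IsShahidiGamma ψ π σ γ →
      IsShahidiGamma ψ⁻¹ (σ.comp (glTransposeInv F)) (π.comp (glTransposeInv F)) γ' →
      γ = γ' := by
  intro γ γ' hγ hγ'
  exact gamma_unique F ψ⁻¹ (σ.comp (glTransposeInv F)) (π.comp (glTransposeInv F))
    (whittakerType_hat F σ ψ hσ) (whittakerType_hat F π ψ hπ)
    (isShahidiGamma_hat F ψ π σ hγ) hγ'

end Statements
end GammaFF
end
end
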